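/- arXiv:1409.2937 — 7 statements merged into one kernel-verified Lean document; each statement's English description precedes it below -/
import Mathlib

section
/- For all positive integers n, the number of divisors d(n) satisfies d(n) ≤ 3.57 · n^(1/3). -/
open Nat

/-- Strip off the `p`-part of `n`. -/
lemma strip (p n : ℕ) (hp : p.Prime) (hn : n ≠ 0) :
    ∃ e m : ℕ, n = p ^ e * m ∧ m ≠ 0 ∧ ¬ p ∣ m ∧ (∀ q, q.Prime → q ∣ m → q ∣ n) ∧
      n.divisors.card = (e + 1) * m.divisors.card := by
  refine ⟨n.factorization p, ordCompl[p] n, (Nat.ordProj_mul_ordCompl_eq_self n p).symm,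
    (Nat.ordCompl_pos p hn).ne', Nat.not_dvd_ordCompl hp hn, ?_, ?_⟩
  · intro q hq hqm
    exact hqm.trans (Nat.ordCompl_dvd n p)
  · have hcop : (p ^ n.factorization p).Coprime (ordCompl[p] n) :=
      Nat.Coprime.pow_left _ (Nat.coprime_ordCompl hp hn)
    have := hcop.card_divisors_mul
    rw [Nat.ordProj_mul_ordCompl_eq_self n p] at this
    rw [this]
    congr 1
    have : (ArithmeticFunction.sigma 0) (p ^ n.factorization p) = n.factorization p + 1 :=
      ArithmeticFunction.sigma_zero_apply_prime_pow hp
    rwa [ArithmeticFunction.sigma_zero_apply] at this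

lemma cube_two : ∀ a : ℕ, (a + 1) ^ 3 ≤ 8 * 2 ^ a := by
  intro a
  induction a with
  | zero => norm_num
  | succ a ih =>
    rcases le_or_gt a 2 with h | h
    · interval_cases a <;> norm_num
    · have h3 : 3 ≤ a := h
      have : (a + 2) ^ 3 ≤ 2 * (a + 1) ^ 3 := by
        zify at *; nlinarith [sq_nonneg ((a:ℤ) - 3), sq_nonneg (a:ℤ)]
      calc (a + 1 + 1) ^ 3 = (a + 2) ^ 3 := by ring
        _ ≤ 2 * (a + 1) ^ 3 := this
        _ ≤ 2 * (8 * 2 ^ a) := by omega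
        _ = 8 * 2 ^ (a + 1) := by ring

lemma cube_three : ∀ b : ℕ, (b + 1) ^ 3 ≤ 3 ^ (b + 1) := by
  intro b
  induction b with
  | zero => norm_num
  | succ b ih =>
    rcases le_or_gt b 1 with h | h
    · interval_cases b <;> norm_num
    · have h2 : 2 ≤ b := h
      have : (b + 2) ^ 3 ≤ 3 * (b + 1) ^ 3 := by
        zify at h2 ⊢; nlinarith [sq_nonneg ((b:ℤ) - 2), sq_nonneg (b:ℤ)]
      calc (b + 1 + 1) ^ 3 = (b + 2) ^ 3 := by ring
        _ ≤ 3 * (b + 1) ^ 3 := this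
        _ ≤ 3 * 3 ^ (b + 1) := by omega
        _ = 3 ^ (b + 1 + 1) := by ring

lemma cube_five : ∀ c : ℕ, 5 * (c + 1) ^ 3 ≤ 8 * 5 ^ c := by
  intro c
  induction c with
  | zero => norm_num
  | succ c ih =>
    rcases Nat.eq_zero_or_pos c with h | h
    · subst h; norm_num
    · have : (c + 2) ^ 3 ≤ 5 * (c + 1) ^ 3 := by
        zify at h ⊢; nlinarith [sq_nonneg ((c:ℤ) - 1), sq_nonneg (c:ℤ)]
      calc 5 * (c + 1 + 1) ^ 3 = 5 * (c + 2) ^ 3 := by ring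
        _ ≤ 5 * (5 * (c + 1) ^ 3) := by omega
        _ ≤ 5 * (8 * 5 ^ c) := by omega
        _ = 8 * 5 ^ (c + 1) := by ring

lemma cube_seven : ∀ d : ℕ, 7 * (d + 1) ^ 3 ≤ 8 * 7 ^ d := by
  intro d
  induction d with
  | zero => norm_num
  | succ d ih =>
    rcases Nat.eq_zero_or_pos d with h | h
    · subst h; norm_num
    · have : (d + 2) ^ 3 ≤ 7 * (d + 1) ^ 3 := by
        zify at h ⊢; nlinarith [sq_nonneg ((d:ℤ) - 1), sq_nonneg (d:ℤ)]
      calc 7 * (d + 1 + 1) ^ 3 = 7 * (d + 2) ^ 3 := by ring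
        _ ≤ 7 * (7 * (d + 1) ^ 3) := by omega
        _ ≤ 7 * (8 * 7 ^ d) := by omega
        _ = 8 * 7 ^ (d + 1) := by ring

lemma cube_eight : ∀ e : ℕ, (e + 1) ^ 3 ≤ 8 ^ e := by
  intro e
  induction e with
  | zero => norm_num
  | succ e ih =>
    have : (e + 2) ^ 3 ≤ 8 * (e + 1) ^ 3 := by
      zify; nlinarith [sq_nonneg (e:ℤ), Int.ofNat_nonneg e]
    calc (e + 1 + 1) ^ 3 = (e + 2) ^ 3 := by ring
      _ ≤ 8 * (e + 1) ^ 3 := this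
      _ ≤ 8 * 8 ^ e := by omega
      _ = 8 ^ (e + 1) := by ring

/-- For `n` all of whose prime factors are at least 8, `d(n)^3 ≤ n`. -/
lemma L8 : ∀ n : ℕ, n ≠ 0 → (∀ q, q.Prime → q ∣ n → 8 ≤ q) →
    n.divisors.card ^ 3 ≤ n := by
  intro n
  induction n using Nat.strong_induction_on with
  | _ n ih =>
    intro hn hq
    rcases eq_or_lt_of_le (Nat.one_le_iff_ne_zero.2 hn) with h1 | h1
    · simp [← h1]
    · set p := n.minFac with hp
      have hpp : p.Prime := Nat.minFac_prime (by omega)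
      have hpn : p ∣ n := Nat.minFac_dvd n
      have hp8 : 8 ≤ p := hq p hpp hpn
      obtain ⟨e, m, hnm, hm0, hpm, hqm, hcard⟩ := strip p n hpp hn
      have he : 1 ≤ e := by
        by_contra h
        push_neg at h
        interval_cases e
        · simp at hnm; exact hpm (hnm ▸ hpn)
      have hmlt : m < n := by
        have h2 : 2 ≤ p ^ e := by
          calc 2 ≤ p := by omega
          _ = p ^ 1 := (pow_one p).symm
          _ ≤ p ^ e := Nat.pow_le_pow_right (by omega) he
        calc m < 2 * m := by omega
        _ ≤ p ^ e * m := Nat.mul_le_mul_right m h2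
        _ = n := hnm.symm
      have ihm : m.divisors.card ^ 3 ≤ m :=
        ih m hmlt hm0 (fun q hq' hqd => hq q hq' (hqm q hq' hqd))
      calc n.divisors.card ^ 3 = (e + 1) ^ 3 * m.divisors.card ^ 3 := by
            rw [hcard]; ring
        _ ≤ 8 ^ e * m := Nat.mul_le_mul (cube_eight e) ihm
        _ ≤ p ^ e * m := Nat.mul_le_mul_right m (Nat.pow_le_pow_left hp8 e)
        _ = n := hnm.symm

lemma L7 : ∀ n : ℕ, n ≠ 0 → (∀ q, q.Prime → q ∣ n → 7 ≤ q) →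
    7 * n.divisors.card ^ 3 ≤ 8 * n := by
  intro n hn hq
  obtain ⟨e, m, hnm, hm0, hpm, hqm, hcard⟩ := strip 7 n (by norm_num) hn
  have h8 : ∀ q, q.Prime → q ∣ m → 8 ≤ q := by
    intro q hq' hqd
    have h7 : 7 ≤ q := hq q hq' (hqm q hq' hqd)
    rcases eq_or_lt_of_le h7 with h | h
    · exact absurd (h ▸ hqd) hpm
    · exact h
  have ihm : m.divisors.card ^ 3 ≤ m := L8 m hm0 h8
  calc 7 * n.divisors.card ^ 3 = (7 * (e + 1) ^ 3) * m.divisors.card ^ 3 := by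
        rw [hcard]; ring
    _ ≤ (8 * 7 ^ e) * m := Nat.mul_le_mul (cube_seven e) ihm
    _ = 8 * (7 ^ e * m) := by ring
    _ = 8 * n := by rw [← hnm]

lemma L5 : ∀ n : ℕ, n ≠ 0 → (∀ q, q.Prime → q ∣ n → 5 ≤ q) →
    35 * n.divisors.card ^ 3 ≤ 64 * n := by
  intro n hn hq
  obtain ⟨e, m, hnm, hm0, hpm, hqm, hcard⟩ := strip 5 n (by norm_num) hn
  have h7 : ∀ q, q.Prime → q ∣ m → 7 ≤ q := by
    intro q hq' hqd
    have h5 : 5 ≤ q := hq q hq' (hqm q hq' hqd)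
    rcases eq_or_lt_of_le h5 with h | h
    · exact absurd (h ▸ hqd) hpm
    · have : q ≠ 6 := by rintro rfl; norm_num at hq'
      omega
  have ihm : 7 * m.divisors.card ^ 3 ≤ 8 * m := L7 m hm0 h7
  calc 35 * n.divisors.card ^ 3 = (5 * (e + 1) ^ 3) * (7 * m.divisors.card ^ 3) := by
        rw [hcard]; ring
    _ ≤ (8 * 5 ^ e) * (8 * m) := Nat.mul_le_mul (cube_five e) ihm
    _ = 64 * (5 ^ e * m) := by ring
    _ = 64 * n := by rw [← hnm]

lemma L3 : ∀ n : ℕ, n ≠ 0 → (∀ q, q.Prime → q ∣ n → 3 ≤ q) →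
    105 * n.divisors.card ^ 3 ≤ 576 * n := by
  intro n hn hq
  obtain ⟨e, m, hnm, hm0, hpm, hqm, hcard⟩ := strip 3 n (by norm_num) hn
  have h5 : ∀ q, q.Prime → q ∣ m → 5 ≤ q := by
    intro q hq' hqd
    have h3 : 3 ≤ q := hq q hq' (hqm q hq' hqd)
    rcases eq_or_lt_of_le h3 with h | h
    · exact absurd (h ▸ hqd) hpm
    · have : q ≠ 4 := by rintro rfl; norm_num at hq'
      omega
  have ihm : 35 * m.divisors.card ^ 3 ≤ 64 * m := L5 m hm0 h5
  calc 105 * n.divisors.card ^ 3 = (e + 1) ^ 3 * (3 * (35 * m.divisors.card ^ 3)) := by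
        rw [hcard]; ring
    _ ≤ 3 ^ (e + 1) * (3 * (64 * m)) := by
        refine Nat.mul_le_mul (cube_three e) ?_
        omega
    _ = 576 * (3 ^ e * m) := by ring
    _ = 576 * n := by rw [← hnm]

lemma L2 : ∀ n : ℕ, n ≠ 0 → 35 * n.divisors.card ^ 3 ≤ 1536 * n := by
  intro n hn
  obtain ⟨e, m, hnm, hm0, hpm, hqm, hcard⟩ := strip 2 n (by norm_num) hn
  have h3 : ∀ q, q.Prime → q ∣ m → 3 ≤ q := by
    intro q hq' hqd
    have h2 : 2 ≤ q := hq'.two_le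
    rcases eq_or_lt_of_le h2 with h | h
    · exact absurd (h ▸ hqd) hpm
    · exact h
  have ihm : 105 * m.divisors.card ^ 3 ≤ 576 * m := L3 m hm0 h3
  have key : 105 * n.divisors.card ^ 3 ≤ 4608 * n := by
    calc 105 * n.divisors.card ^ 3 = (e + 1) ^ 3 * (105 * m.divisors.card ^ 3) := by
          rw [hcard]; ring
      _ ≤ (8 * 2 ^ e) * (576 * m) := Nat.mul_le_mul (cube_two e) ihm
      _ = 4608 * (2 ^ e * m) := by ring
      _ = 4608 * n := by rw [← hnm]
  omega

theorem divisor_bound (n : ℕ) (hn : 0 < n) :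
    ((n.divisors.card : ℝ)) ≤ 3.57 * (n : ℝ) ^ ((1 : ℝ) / 3) := by
  have hnat : 35 * n.divisors.card ^ 3 ≤ 1536 * n := L2 n hn.ne'
  have hreal : (n.divisors.card : ℝ) ^ 3 ≤ 1536 / 35 * n := by
    have : (35 : ℝ) * (n.divisors.card : ℝ) ^ 3 ≤ 1536 * n := by
      exact_mod_cast hnat
    linarith
  have hn0 : (0 : ℝ) ≤ (n : ℝ) := Nat.cast_nonneg n
  have hr0 : (0 : ℝ) ≤ (n : ℝ) ^ ((1 : ℝ) / 3) := Real.rpow_nonneg hn0 _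
  have hcube : ((n : ℝ) ^ ((1 : ℝ) / 3)) ^ 3 = (n : ℝ) := by
    rw [← Real.rpow_natCast ((n : ℝ) ^ ((1 : ℝ) / 3)) 3, ← Real.rpow_mul hn0]
    norm_num
  have hR0 : (0 : ℝ) ≤ 3.57 * (n : ℝ) ^ ((1 : ℝ) / 3) := by positivity
  refine le_of_pow_le_pow_left₀ (n := 3) (by norm_num) hR0 ?_
  have : (3.57 * (n : ℝ) ^ ((1 : ℝ) / 3)) ^ 3 = 3.57 ^ 3 * (n : ℝ) := by
    rw [mul_pow, hcube]
  rw [this]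
  have h357 : (1536 : ℝ) / 35 ≤ 3.57 ^ 3 := by norm_num
  calc (n.divisors.card : ℝ) ^ 3 ≤ 1536 / 35 * n := hreal
    _ ≤ 3.57 ^ 3 * n := by nlinarith
end

section
/- For all odd positive integers n, the number of divisors d(n) satisfies d(n) ≤ 1.8 · n^(1/3). -/
open Finset

/-- constant per prime (cubed constants) -/
noncomputable def Cc : ℕ → ℝ := fun p =>
  if p = 3 then 3048625/1000000 else if p = 5 then 1601613/1000000 else
  if p = 7 then 1157625/1000000 else 1

lemma Cc_one_le (p : ℕ) : 1 ≤ Cc p := by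
  unfold Cc; split_ifs <;> norm_num

lemma aux3 : ∀ a : ℕ, (a+3)^3 * 1000000 ≤ 3048625 * 3^(a+2) := by
  intro a
  induction a with
  | zero => norm_num
  | succ b ih =>
    have h : (b+4)^3 * 1000000 ≤ 3 * ((b+3)^3 * 1000000) := by
      zify
      have hb : (0:ℤ) ≤ (b:ℤ) := Int.natCast_nonneg b
      nlinarith [hb, mul_nonneg hb hb, mul_nonneg (mul_nonneg hb hb) hb]
    calc (b+1+3)^3 * 1000000 ≤ 3 * ((b+3)^3 * 1000000) := by ring_nf; ring_nf at h; omega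
      _ ≤ 3 * (3048625 * 3^(b+2)) := by omega
      _ = 3048625 * 3^(b+1+2) := by ring

lemma aux5 : ∀ a : ℕ, (a+2)^3 * 1000000 ≤ 1601613 * 5^(a+1) := by
  intro a
  induction a with
  | zero => norm_num
  | succ b ih =>
    have h : (b+3)^3 * 1000000 ≤ 5 * ((b+2)^3 * 1000000) := by
      zify
      have hb : (0:ℤ) ≤ (b:ℤ) := Int.natCast_nonneg b
      nlinarith [hb, mul_nonneg hb hb, mul_nonneg (mul_nonneg hb hb) hb]
    calc (b+1+2)^3 * 1000000 ≤ 5 * ((b+2)^3 * 1000000) := by ring_nf; ring_nf at h; omega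
      _ ≤ 5 * (1601613 * 5^(b+1)) := by omega
      _ = 1601613 * 5^(b+1+1) := by ring

lemma aux7 : ∀ a : ℕ, (a+2)^3 * 1000000 ≤ 1157625 * 7^(a+1) := by
  intro a
  induction a with
  | zero => norm_num
  | succ b ih =>
    have h : (b+3)^3 * 1000000 ≤ 7 * ((b+2)^3 * 1000000) := by
      zify
      have hb : (0:ℤ) ≤ (b:ℤ) := Int.natCast_nonneg b
      nlinarith [hb, mul_nonneg hb hb, mul_nonneg (mul_nonneg hb hb) hb]
    calc (b+1+2)^3 * 1000000 ≤ 7 * ((b+2)^3 * 1000000) := by ring_nf; ring_nf at h; omega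
      _ ≤ 7 * (1157625 * 7^(b+1)) := by omega
      _ = 1157625 * 7^(b+1+1) := by ring

lemma aux8 : ∀ a : ℕ, (a+2)^3 ≤ 8^(a+1) := by
  intro a
  induction a with
  | zero => norm_num
  | succ b ih =>
    have h : (b+3)^3 ≤ 8 * (b+2)^3 := by
      zify
      have hb : (0:ℤ) ≤ (b:ℤ) := Int.natCast_nonneg b
      nlinarith [hb, mul_nonneg hb hb, mul_nonneg (mul_nonneg hb hb) hb]
    calc (b+1+2)^3 ≤ 8 * (b+2)^3 := by ring_nf; ring_nf at h; omega
      _ ≤ 8 * 8^(b+1) := by omega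
      _ = 8^(b+1+1) := by ring

lemma prime_ge (p : ℕ) (hp : p.Prime) (h2 : p ≠ 2) (h3 : p ≠ 3) (h5 : p ≠ 5)
    (h7 : p ≠ 7) : 8 ≤ p := by
  by_contra h
  push_neg at h
  interval_cases p <;> simp_all (config := {decide := true})

lemma one_le_prod_real {s : Finset ℕ} (f : ℕ → ℝ) (hf : ∀ i ∈ s, 1 ≤ f i) :
    1 ≤ ∏ i ∈ s, f i := by
  calc (1:ℝ) = ∏ _i ∈ s, 1 := Finset.prod_const_one.symm
    _ ≤ ∏ i ∈ s, f i := Finset.prod_le_prod (by intros; norm_num) hf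

lemma prod_mono_subset_real {s t : Finset ℕ} (h : s ⊆ t) (f : ℕ → ℝ)
    (hf : ∀ i, 1 ≤ f i) : ∏ i ∈ s, f i ≤ ∏ i ∈ t, f i := by
  rw [← Finset.prod_sdiff h]
  have h1 : 1 ≤ ∏ i ∈ t \ s, f i := one_le_prod_real f (fun i _ => hf i)
  have h0 : 0 ≤ ∏ i ∈ s, f i :=
    Finset.prod_nonneg (fun i _ => le_trans zero_le_one (hf i))
  nlinarith

lemma per_prime (p a : ℕ) (hp : p.Prime) (h2 : p ≠ 2) (ha : 1 ≤ a) :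
    ((a : ℝ) + 1)^3 ≤ Cc p * (p : ℝ)^a := by
  unfold Cc
  by_cases h3 : p = 3
  · subst h3; simp only [if_pos rfl]
    rcases Nat.exists_eq_add_of_le ha with ⟨b, rfl⟩
    rcases b with _ | c
    · norm_num
    · have := aux3 c
      have : ((c+3:ℕ)^3 * 1000000 : ℝ) ≤ (3048625 * 3^(c+2) : ℕ) := by exact_mod_cast this
      push_cast at this
      rw [show 1 + (c+1) = c + 2 by ring]
      push_cast
      nlinarith [this]
  by_cases h5 : p = 5
  · subst h5; simp only [h3, if_false, if_pos rfl]
    rcases Nat.exists_eq_add_of_le ha with ⟨b, rfl⟩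
    have := aux5 b
    have : ((b+2:ℕ)^3 * 1000000 : ℝ) ≤ (1601613 * 5^(b+1) : ℕ) := by exact_mod_cast this
    push_cast at this
    rw [show 1 + b = b + 1 by ring]
    push_cast
    nlinarith [this]
  by_cases h7 : p = 7
  · subst h7; simp only [h3, h5, if_false, if_pos rfl]
    rcases Nat.exists_eq_add_of_le ha with ⟨b, rfl⟩
    have := aux7 b
    have : ((b+2:ℕ)^3 * 1000000 : ℝ) ≤ (1157625 * 7^(b+1) : ℕ) := by exact_mod_cast this
    push_cast at this
    rw [show 1 + b = b + 1 by ring]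
    push_cast
    nlinarith [this]
  · simp only [h3, h5, h7, if_false, one_mul]
    have hp8 : 8 ≤ p := prime_ge p hp h2 h3 h5 h7
    rcases Nat.exists_eq_add_of_le ha with ⟨b, rfl⟩
    have h1 : (b+2)^3 ≤ 8^(b+1) := aux8 b
    have h2' : (8:ℕ)^(b+1) ≤ p^(b+1) := Nat.pow_le_pow_left hp8 _
    have : ((b+2:ℕ)^3 : ℝ) ≤ ((p^(b+1) : ℕ) : ℝ) := by exact_mod_cast h1.trans h2'
    push_cast at this
    rw [show 1 + b = b + 1 by ring]
    push_cast
    nlinarith [this]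

lemma cube_bound (n : ℕ) (hn : 0 < n) (hodd : Odd n) :
    ((n.divisors.card : ℝ))^3 ≤ 5.832 * n := by
  have hd : n.divisors.card = n.factorization.prod fun _ k => k + 1 :=
    Nat.card_divisors hn.ne'
  have hfact : n.factorization.prod (fun p k => p ^ k) = n :=
    Nat.factorization_prod_pow_eq_self hn.ne'
  set S := n.primeFactors with hS
  have hSsupp : n.factorization.support = S := rfl
  -- express in reals
  have hdR : ((n.divisors.card : ℝ))^3 = ∏ p ∈ S, ((n.factorization p : ℝ) + 1)^3 := by
    rw [hd, Finsupp.prod]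
    push_cast [hSsupp]
    rw [← Finset.prod_pow]
  have hnR : (n : ℝ) = ∏ p ∈ S, (p : ℝ) ^ (n.factorization p) := by
    conv_lhs => rw [← hfact]
    rw [Finsupp.prod]
    push_cast [hSsupp]
    rfl
  rw [hdR, hnR]
  have step1 : ∏ p ∈ S, ((n.factorization p : ℝ) + 1)^3
      ≤ ∏ p ∈ S, (Cc p * (p : ℝ) ^ (n.factorization p)) := by
    apply Finset.prod_le_prod
    · intro p _; positivity
    · intro p hp
      have hpp : p.Prime := Nat.prime_of_mem_primeFactors hp
      have hp2 : p ≠ 2 := by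
        rintro rfl
        exact (Nat.not_even_iff_odd.mpr hodd) ((even_iff_two_dvd).2
          (Nat.dvd_of_mem_primeFactors hp))
      have ha : 1 ≤ n.factorization p := by
        have := Nat.mem_primeFactors.mp hp
        exact (Nat.Prime.factorization_pos_of_dvd hpp hn.ne' this.2.1)
      exact per_prime p _ hpp hp2 ha
  have step2 : ∏ p ∈ S, (Cc p * (p : ℝ) ^ (n.factorization p))
      = (∏ p ∈ S, Cc p) * ∏ p ∈ S, (p : ℝ) ^ (n.factorization p) := by
    rw [Finset.prod_mul_distrib]
  have step3 : (∏ p ∈ S, Cc p) ≤ 5.832 := by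
    have hsub : ∏ p ∈ S, Cc p = ∏ p ∈ S ∩ {3, 5, 7}, Cc p := by
      symm
      apply Finset.prod_subset (Finset.inter_subset_left)
      intro x hx hnx
      have : x ∉ ({3,5,7} : Finset ℕ) := fun h => hnx (Finset.mem_inter.mpr ⟨hx, h⟩)
      simp only [Finset.mem_insert, Finset.mem_singleton, not_or] at this
      unfold Cc
      simp [this.1, this.2.1, this.2.2]
    rw [hsub]
    have h1 : ∏ p ∈ S ∩ {3,5,7}, Cc p ≤ ∏ p ∈ ({3,5,7} : Finset ℕ), Cc p := by
      exact prod_mono_subset_real Finset.inter_subset_right Cc Cc_one_le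
    refine h1.trans ?_
    rw [show ({3,5,7} : Finset ℕ) = insert 3 (insert 5 {7}) from rfl]
    rw [Finset.prod_insert (by decide), Finset.prod_insert (by decide),
      Finset.prod_singleton]
    unfold Cc
    norm_num
  calc ∏ p ∈ S, ((n.factorization p : ℝ) + 1)^3
      ≤ (∏ p ∈ S, Cc p) * ∏ p ∈ S, (p : ℝ) ^ (n.factorization p) := by
        rw [← step2]; exact step1
    _ ≤ 5.832 * ∏ p ∈ S, (p : ℝ) ^ (n.factorization p) := by
        apply mul_le_mul_of_nonneg_right step3
        apply Finset.prod_nonneg; intro p _; positivity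

theorem divisor_bound_odd (n : ℕ) (hn : 0 < n) (hodd : Odd n) :
    ((n.divisors.card : ℝ)) ≤ 1.8 * (n : ℝ) ^ ((1 : ℝ) / 3) := by
  have key := cube_bound n hn hodd
  have hdnn : (0:ℝ) ≤ (n.divisors.card : ℝ) := Nat.cast_nonneg _
  have h1 : ((n.divisors.card : ℝ)) = (((n.divisors.card : ℝ))^3) ^ ((1:ℝ)/3) := by
    rw [← Real.rpow_natCast, ← Real.rpow_mul hdnn]
    norm_num
  rw [h1]
  have h2 : (((n.divisors.card : ℝ))^3) ^ ((1:ℝ)/3) ≤ ((5.832:ℝ) * n) ^ ((1:ℝ)/3) := by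
    apply Real.rpow_le_rpow (pow_nonneg hdnn 3) key (by norm_num)
  refine h2.trans ?_
  rw [Real.mul_rpow (by norm_num) (Nat.cast_nonneg n)]
  have h3 : ((5.832:ℝ)) ^ ((1:ℝ)/3) = 1.8 := by
    have : ((5.832:ℝ)) = (1.8:ℝ)^(3:ℕ) := by norm_num
    rw [this, ← Real.rpow_natCast (1.8:ℝ) 3, ← Real.rpow_mul (by norm_num)]
    norm_num
  rw [h3]
end

section
/- For all positive integers n coprime to 5, the number of divisors d(n) satisfies d(n) ≤ 3.05 · n^(1/3). -/
private lemma L2_s3 (a : ℕ) : (a + 1) ^ 3 ≤ 8 * 2 ^ a := by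
  rcases lt_or_ge a 3 with h | h
  · interval_cases a <;> norm_num
  · induction a, h using Nat.le_induction with
    | base => norm_num
    | succ b hb ih =>
      have key : (b + 2) ^ 3 ≤ 2 * (b + 1) ^ 3 := by
        zify
        have hb' : (3 : ℤ) ≤ b := by exact_mod_cast hb
        nlinarith [hb', sq_nonneg ((b : ℤ) - 3), sq_nonneg ((b : ℤ) + 1)]
      calc (b + 1 + 1) ^ 3 ≤ 2 * (b + 1) ^ 3 := key
        _ ≤ 2 * (8 * 2 ^ b) := mul_le_mul_right ih 2
        _ = 8 * 2 ^ (b + 1) := by ring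

private lemma L3_s3 (a : ℕ) : (a + 1) ^ 3 ≤ 3 * 3 ^ a := by
  rcases lt_or_ge a 2 with h | h
  · interval_cases a <;> norm_num
  · induction a, h using Nat.le_induction with
    | base => norm_num
    | succ b hb ih =>
      have key : (b + 2) ^ 3 ≤ 3 * (b + 1) ^ 3 := by
        zify
        have hb' : (2 : ℤ) ≤ b := by exact_mod_cast hb
        nlinarith [hb', sq_nonneg ((b : ℤ) - 2), sq_nonneg ((b : ℤ) + 1)]
      calc (b + 1 + 1) ^ 3 ≤ 3 * (b + 1) ^ 3 := key
        _ ≤ 3 * (3 * 3 ^ b) := mul_le_mul_right ih 3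
        _ = 3 * 3 ^ (b + 1) := by ring

private lemma L7_s3 (a : ℕ) : 7 * (a + 1) ^ 3 ≤ 8 * 7 ^ a := by
  rcases lt_or_ge a 1 with h | h
  · interval_cases a <;> norm_num
  · induction a, h using Nat.le_induction with
    | base => norm_num
    | succ b hb ih =>
      have key : (b + 2) ^ 3 ≤ 7 * (b + 1) ^ 3 := by
        zify
        have hb' : (1 : ℤ) ≤ b := by exact_mod_cast hb
        nlinarith [hb', sq_nonneg ((b : ℤ) - 1), sq_nonneg ((b : ℤ) + 1)]
      calc 7 * (b + 1 + 1) ^ 3 ≤ 7 * (7 * (b + 1) ^ 3) := mul_le_mul_right key 7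
        _ ≤ 7 * (8 * 7 ^ b) := mul_le_mul_right ih 7
        _ = 8 * 7 ^ (b + 1) := by ring

private lemma Lbig (p a : ℕ) (hp : 8 ≤ p) : (a + 1) ^ 3 ≤ p ^ a := by
  have h1 : a + 1 ≤ 2 ^ a := Nat.lt_two_pow_self
  calc (a + 1) ^ 3 ≤ (2 ^ a) ^ 3 := Nat.pow_le_pow_left h1 3
    _ = 8 ^ a := by rw [← pow_mul, mul_comm, pow_mul]; norm_num
    _ ≤ p ^ a := Nat.pow_le_pow_left hp a

/-- the per-prime constant -/
noncomputable def cc (p : ℕ) : ℝ :=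
  if p = 2 then 8 else if p = 3 then 3 else if p = 7 then 8 / 7 else 1

private lemma keylemma (p a : ℕ) (hprime : p.Prime) (hp5 : p ≠ 5) :
    ((a + 1 : ℕ) : ℝ) ^ 3 ≤ cc p * ((p : ℝ) ^ a) := by
  rcases eq_or_ne p 2 with h2 | h2
  · subst h2
    have hc : cc 2 = 8 := by norm_num [cc]
    rw [hc]
    exact_mod_cast L2_s3 a
  rcases eq_or_ne p 3 with h3 | h3
  · subst h3
    have hc : cc 3 = 3 := by norm_num [cc]
    rw [hc]
    exact_mod_cast L3_s3 a
  rcases eq_or_ne p 7 with h7 | h7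
  · subst h7
    have hc : cc 7 = 8 / 7 := by norm_num [cc]
    rw [hc, div_mul_eq_mul_div, le_div_iff₀ (by norm_num : (0:ℝ) < 7)]
    have h' : (7 : ℝ) * ((a + 1 : ℕ) : ℝ) ^ 3 ≤ 8 * (7 : ℝ) ^ a := by
      exact_mod_cast L7_s3 a
    push_cast at h' ⊢
    linarith
  · have hc : cc p = 1 := by simp [cc, h2, h3, h7]
    rw [hc, one_mul]
    have hp8 : 8 ≤ p := by
      have h2le := hprime.two_le
      by_contra hlt
      push_neg at hlt
      interval_cases p <;> first | omega | exact absurd hprime (by decide)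
    exact_mod_cast Lbig p a hp8

theorem divisor_bound_coprime_five (n : ℕ) (hn : 0 < n) (h5 : Nat.Coprime n 5) :
    ((n.divisors.card : ℝ)) ≤ 3.05 * (n : ℝ) ^ ((1 : ℝ) / 3) := by
  set S := n.primeFactors with hS
  have hne5 : ∀ p ∈ S, p ≠ 5 := by
    intro p hp hpe
    have hdvd : p ∣ n := Nat.dvd_of_mem_primeFactors hp
    rw [hpe] at hdvd
    have h51 : (5 : ℕ) ∣ 1 := h5 ▸ Nat.dvd_gcd hdvd dvd_rfl
    norm_num at h51
  have hd : n.divisors.card = ∏ p ∈ S, (n.factorization p + 1) := by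
    rw [Nat.card_divisors hn.ne']
  have hnprod : n = ∏ p ∈ S, p ^ n.factorization p := by
    conv_lhs => rw [← Nat.factorization_prod_pow_eq_self hn.ne']
    unfold Finsupp.prod
    rw [Nat.support_factorization]
  have hcc_ge_one : ∀ p, (1 : ℝ) ≤ cc p := by
    intro p
    unfold cc
    split_ifs <;> norm_num
  have hccprod : ∏ p ∈ S, cc p ≤ 192 / 7 := by
    have hfilter : ∏ p ∈ S, cc p = ∏ p ∈ S.filter (· ∈ ({2, 3, 7} : Finset ℕ)), cc p := by
      rw [Finset.prod_filter]
      apply Finset.prod_congr rfl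
      intro p hp
      by_cases h : p ∈ ({2, 3, 7} : Finset ℕ)
      · rw [if_pos h]
      · rw [if_neg h]
        simp only [Finset.mem_insert, Finset.mem_singleton] at h
        push_neg at h
        simp [cc, h.1, h.2.1, h.2.2]
    rw [hfilter]
    have hsub : S.filter (· ∈ ({2, 3, 7} : Finset ℕ)) ⊆ ({2, 3, 7} : Finset ℕ) := by
      intro p hp
      exact (Finset.mem_filter.mp hp).2
    have hsdiff := Finset.prod_sdiff (f := cc) hsub
    have hA : (1 : ℝ) ≤ ∏ p ∈ ({2, 3, 7} : Finset ℕ) \ S.filter (· ∈ ({2, 3, 7} : Finset ℕ)), cc p := by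
      calc (1 : ℝ) = ∏ p ∈ ({2, 3, 7} : Finset ℕ) \ S.filter (· ∈ ({2, 3, 7} : Finset ℕ)), 1 := by
            rw [Finset.prod_const_one]
        _ ≤ _ := Finset.prod_le_prod (fun _ _ => zero_le_one) (fun p _ => hcc_ge_one p)
    have hB : (0 : ℝ) ≤ ∏ p ∈ S.filter (· ∈ ({2, 3, 7} : Finset ℕ)), cc p := by
      apply Finset.prod_nonneg
      intro p _
      linarith [hcc_ge_one p]
    calc ∏ p ∈ S.filter (· ∈ ({2, 3, 7} : Finset ℕ)), cc p
        ≤ ∏ p ∈ ({2, 3, 7} : Finset ℕ), cc p := by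
          rw [← hsdiff]
          exact le_mul_of_one_le_left hB hA
      _ = 192 / 7 := by norm_num [cc]
  have hmain : ((n.divisors.card : ℝ)) ^ 3 ≤ (192 / 7) * n := by
    rw [hd]
    push_cast
    rw [← Finset.prod_pow]
    have hn' : ((n : ℝ)) = ∏ p ∈ S, ((p : ℝ) ^ n.factorization p) := by
      conv_lhs => rw [hnprod]
      push_cast
      ring
    calc ∏ p ∈ S, ((n.factorization p : ℝ) + 1) ^ 3
        ≤ ∏ p ∈ S, (cc p * ((p : ℝ) ^ n.factorization p)) := by
          apply Finset.prod_le_prod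
          · intro p _; positivity
          · intro p hp
            have := keylemma p (n.factorization p) (Nat.prime_of_mem_primeFactors hp)
              (hne5 p hp)
            push_cast at this
            exact this
      _ = (∏ p ∈ S, cc p) * ∏ p ∈ S, ((p : ℝ) ^ n.factorization p) :=
          Finset.prod_mul_distrib
      _ ≤ (192 / 7) * n := by
          rw [← hn']
          exact mul_le_mul_of_nonneg_right hccprod (Nat.cast_nonneg n)
  have hcube : ((n.divisors.card : ℝ)) ^ 3 ≤ (3.05 * (n : ℝ) ^ ((1 : ℝ) / 3)) ^ 3 := by
    have hrhs : (3.05 * (n : ℝ) ^ ((1 : ℝ) / 3)) ^ 3 = 3.05 ^ 3 * n := by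
      rw [mul_pow, ← Real.rpow_natCast ((n : ℝ) ^ ((1 : ℝ) / 3)) 3,
        ← Real.rpow_mul (Nat.cast_nonneg n)]
      norm_num
    rw [hrhs]
    calc ((n.divisors.card : ℝ)) ^ 3 ≤ (192 / 7) * n := hmain
      _ ≤ 3.05 ^ 3 * n := by
          apply mul_le_mul_of_nonneg_right _ (Nat.cast_nonneg n)
          norm_num
  have h2 : (0 : ℝ) ≤ 3.05 * (n : ℝ) ^ ((1 : ℝ) / 3) := by positivity
  exact le_of_pow_le_pow_left₀ (by norm_num) h2 hcube
end

section
/- For all positive integers n coprime to 6, the number of divisors d(n) satisfies d(n) ≤ 1.23 · n^(1/3). -/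
-- cube growth lemma for small bases (4 ≤ k ≤ 8)
lemma keyk (k : ℕ) (hk : 4 ≤ k) (hk8 : k ≤ 8) : ∀ a, k * (a + 1) ^ 3 ≤ 8 * k ^ a := by
  intro a
  induction a with
  | zero => simpa using le_trans hk8 (by omega)
  | succ a ih =>
    rcases Nat.eq_zero_or_pos a with rfl | ha
    · show k * 8 ≤ 8 * k ^ 1
      rw [pow_one]; omega
    · have h1 : 8 * (k * (a + 2) ^ 3) ≤ 27 * (k * (a + 1) ^ 3) := by
        have h2 : (2 * (a + 2)) ^ 3 ≤ (3 * (a + 1)) ^ 3 :=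
          Nat.pow_le_pow_left (by omega) 3
        calc 8 * (k * (a + 2) ^ 3) = k * (2 * (a + 2)) ^ 3 := by ring
          _ ≤ k * (3 * (a + 1)) ^ 3 := Nat.mul_le_mul_left k h2
          _ = 27 * (k * (a + 1) ^ 3) := by ring
      have h3 : 27 * (k * (a + 1) ^ 3) ≤ 27 * (8 * k ^ a) := Nat.mul_le_mul_left 27 ih
      have h4 : 27 * (8 * k ^ a) ≤ 8 * (8 * k ^ (a + 1)) := by
        have : 27 * k ^ a ≤ 8 * (k * k ^ a) :=
          le_trans (Nat.mul_le_mul_right _ (by omega : 27 ≤ 8 * k))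
            (le_of_eq (by ring))
        calc 27 * (8 * k ^ a) = 8 * (27 * k ^ a) := by ring
          _ ≤ 8 * (8 * (k * k ^ a)) := Nat.mul_le_mul_left 8 this
          _ = 8 * (8 * k ^ (a + 1)) := by rw [pow_succ]; ring_nf
      show k * (a + 2) ^ 3 ≤ 8 * k ^ (a + 1)
      omega

lemma keyP (p : ℕ) (hp : 11 ≤ p) : ∀ a, 1 ≤ a → (a + 1) ^ 3 ≤ p ^ a := by
  intro a
  induction a with
  | zero => omega
  | succ a ih =>
    intro _
    rcases Nat.eq_zero_or_pos a with rfl | ha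
    · simpa using by omega
    · have h1 : (2 * (a + 2)) ^ 3 ≤ (3 * (a + 1)) ^ 3 := Nat.pow_le_pow_left (by omega) 3
      have h2 : 8 * (a + 2) ^ 3 ≤ 27 * (a + 1) ^ 3 := by
        calc 8 * (a + 2) ^ 3 = (2 * (a + 2)) ^ 3 := by ring
          _ ≤ (3 * (a + 1)) ^ 3 := h1
          _ = 27 * (a + 1) ^ 3 := by ring
      have h3 : 27 * (a + 1) ^ 3 ≤ 27 * p ^ a := Nat.mul_le_mul_left 27 (ih ha)
      have h4 : 27 * p ^ a ≤ 8 * p ^ (a + 1) := by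
        calc 27 * p ^ a ≤ (8 * p) * p ^ a := Nat.mul_le_mul_right _ (by omega)
          _ = 8 * p ^ (a + 1) := by rw [pow_succ]; ring
      show (a + 2) ^ 3 ≤ p ^ (a + 1)
      omega

-- main lemma for numbers coprime to 210
lemma divA : ∀ m : ℕ, Nat.Coprime m 210 → m.divisors.card ^ 3 ≤ m := by
  apply Nat.recOnPosPrimePosCoprime
  · intro p a hp ha hco
    have hpp : p.Prime := hp
    have hpc : Nat.Coprime p 210 :=
      Nat.Coprime.coprime_dvd_left (dvd_pow_self p ha.ne') hco
    have hp11 : 11 ≤ p := by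
      by_contra hlt
      push_neg at hlt
      have h2 := hpp.two_le
      interval_cases p <;> revert hpp hpc <;> decide
    have hcard : (p ^ a).divisors.card = a + 1 := by
      simp [Nat.divisors_prime_pow hpp]
    rw [hcard]
    exact keyP p hp11 a ha
  · intro h; exact absurd h (by norm_num [Nat.Coprime])
  · intro _; simp
  · intro a b ha hb hab Pa Pb hco
    have hca : Nat.Coprime a 210 := Nat.Coprime.coprime_dvd_left ⟨b, rfl⟩ hco
    have hcb : Nat.Coprime b 210 := Nat.Coprime.coprime_dvd_left ⟨a, mul_comm a b⟩ hco
    rw [Nat.Coprime.card_divisors_mul hab, mul_pow]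
    exact Nat.mul_le_mul (Pa hca) (Pb hcb)

lemma intBound (n : ℕ) (hn : 0 < n) (h6 : Nat.Coprime n 6) :
    35 * n.divisors.card ^ 3 ≤ 64 * n := by
  have h5 : Nat.Prime 5 := by norm_num
  have h7 : Nat.Prime 7 := by norm_num
  set a := n.factorization 5 with ha
  set k := ordCompl[5] n with hk
  have hnk : 5 ^ a * k = n := Nat.ordProj_mul_ordCompl_eq_self n 5
  have hk0 : 0 < k := Nat.ordCompl_pos 5 hn.ne'
  have h5k : ¬ (5 ∣ k) := Nat.not_dvd_ordCompl h5 hn.ne'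
  set b := k.factorization 7 with hb
  set m := ordCompl[7] k with hm
  have hkm : 7 ^ b * m = k := Nat.ordProj_mul_ordCompl_eq_self k 7
  have hm0 : 0 < m := Nat.ordCompl_pos 7 hk0.ne'
  have h7m : ¬ (7 ∣ m) := Nat.not_dvd_ordCompl h7 hk0.ne'
  have hmdk : m ∣ k := Nat.ordCompl_dvd k 7
  have hkdn : k ∣ n := Nat.ordCompl_dvd n 5
  have hmdn : m ∣ n := hmdk.trans hkdn
  have h5m : ¬ (5 ∣ m) := fun h => h5k (h.trans hmdk)
  -- m coprime to 210
  have hm2 : Nat.Coprime m 2 := Nat.Coprime.coprime_dvd_left hmdn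
    (Nat.Coprime.coprime_dvd_right (by norm_num) h6)
  have hm3 : Nat.Coprime m 3 := Nat.Coprime.coprime_dvd_left hmdn
    (Nat.Coprime.coprime_dvd_right (by norm_num) h6)
  have hm5 : Nat.Coprime m 5 := ((Nat.Prime.coprime_iff_not_dvd h5).mpr h5m).symm
  have hm7 : Nat.Coprime m 7 := ((Nat.Prime.coprime_iff_not_dvd h7).mpr h7m).symm
  have hm210 : Nat.Coprime m 210 := by
    have : (210 : ℕ) = 2 * (3 * (5 * 7)) := by norm_num
    rw [this]
    exact (hm2.mul_right (hm3.mul_right (hm5.mul_right hm7)))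
  -- divisor counts
  have hc5k : Nat.Coprime (5 ^ a) k := ((h5.coprime_iff_not_dvd).mpr h5k).pow_left _
  have hc7m : Nat.Coprime (7 ^ b) m := ((h7.coprime_iff_not_dvd).mpr h7m).pow_left _
  have hdk : k.divisors.card = (b + 1) * m.divisors.card := by
    rw [← hkm, Nat.Coprime.card_divisors_mul hc7m]
    congr 1
    simp [Nat.divisors_prime_pow h7]
  have hdn : n.divisors.card = (a + 1) * ((b + 1) * m.divisors.card) := by
    rw [← hnk, Nat.Coprime.card_divisors_mul hc5k, hdk]
    congr 1
    simp [Nat.divisors_prime_pow h5]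
  rw [hdn, ← hnk, ← hkm]
  have e1 : 35 * ((a + 1) * ((b + 1) * m.divisors.card)) ^ 3
      = (5 * (a + 1) ^ 3) * ((7 * (b + 1) ^ 3) * m.divisors.card ^ 3) := by ring
  have e2 : 64 * (5 ^ a * (7 ^ b * m)) = (8 * 5 ^ a) * ((8 * 7 ^ b) * m) := by ring
  rw [e1, e2]
  exact Nat.mul_le_mul (keyk 5 (by norm_num) (by norm_num) a)
    (Nat.mul_le_mul (keyk 7 (by norm_num) (by norm_num) b) (divA m hm210))

theorem divisor_bound_coprime_six (n : ℕ) (hn : 0 < n) (h6 : Nat.Coprime n 6) :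
    ((n.divisors.card : ℝ)) ≤ 1.23 * (n : ℝ) ^ ((1 : ℝ) / 3) := by
  have hI := intBound n hn h6
  have hnR : (0 : ℝ) ≤ (n : ℝ) := Nat.cast_nonneg n
  have hrpow : (0 : ℝ) ≤ (n : ℝ) ^ ((1 : ℝ) / 3) := Real.rpow_nonneg hnR _
  have hRHS : (0 : ℝ) ≤ 1.23 * (n : ℝ) ^ ((1 : ℝ) / 3) := by positivity
  have hcube : ((n.divisors.card : ℝ)) ^ 3 ≤ (1.23 * (n : ℝ) ^ ((1 : ℝ) / 3)) ^ 3 := by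
    have hpow3 : ((n : ℝ) ^ ((1 : ℝ) / 3)) ^ (3 : ℕ) = (n : ℝ) := by
      rw [← Real.rpow_natCast ((n : ℝ) ^ ((1 : ℝ) / 3)) 3, ← Real.rpow_mul hnR]
      norm_num
    have h1 : ((n.divisors.card : ℝ)) ^ 3 ≤ (64 / 35) * (n : ℝ) := by
      have := (Nat.cast_le (α := ℝ)).mpr hI
      push_cast at this
      linarith
    calc ((n.divisors.card : ℝ)) ^ 3 ≤ (64 / 35) * (n : ℝ) := h1
      _ ≤ 1.23 ^ 3 * (n : ℝ) := by nlinarith [hnR]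
      _ = (1.23 * (n : ℝ) ^ ((1 : ℝ) / 3)) ^ 3 := by rw [mul_pow, hpow3]
  exact le_of_pow_le_pow_left₀ (by norm_num) hRHS hcube
end

section
/- For every integer b ≥ 75, the number of 5-regular partitions satisfies p_5(b+2) < 2 · p_5(b). -/
/-- `pk k n` is the number of `k`-regular partitions of `n`,
i.e. partitions of `n` in which no part is divisible by `k`. -/
noncomputable def pk (k n : ℕ) : ℕ :=
  Fintype.card {μ : n.Partition // ∀ i ∈ μ.parts, ¬ k ∣ i}

namespace P5Aux

open Multiset

/-- The parts of size at least 6. -/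
def bigF (M : Multiset ℕ) : Multiset ℕ := M.filter (fun x => 6 ≤ x)

/-- The minimal part of size at least 6. -/
noncomputable def qm (M : Multiset ℕ) : ℕ := sInf {x | x ∈ bigF M}

def encT (M : Multiset ℕ) : Bool := decide (M.count 2 = 0)

noncomputable def encM (M : Multiset ℕ) : Multiset ℕ :=
  if M.count 2 ≠ 0 then M.erase 2
  else if 2 ≤ M.count 1 then (M.erase 1).erase 1
  else if bigF M ≠ 0 then
    (if M.count 1 = 1 then
      replicate (qm M - 3) 1 + replicate 1 2 + replicate (M.count 3) 3
        + replicate (M.count 4) 4 + (bigF M).erase (qm M)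
    else
      replicate (qm M - 6) 1 + replicate 2 2 + replicate (M.count 3) 3
        + replicate (M.count 4) 4 + (bigF M).erase (qm M))
  else if 2 ≤ M.count 4 then
    replicate (M.count 1) 1 + replicate 3 2 + replicate (M.count 3) 3
      + replicate (M.count 4 - 2) 4
  else if M.count 4 = 1 then
    replicate (M.count 1) 1 + replicate 4 2 + replicate (M.count 3 - 2) 3
  else
    replicate (M.count 1 + 2) 1 + replicate 4 2 + replicate (M.count 3 - 4) 3

def dec : Bool → Multiset ℕ → Multiset ℕ
  | false, μ => 2 ::ₘ μ
  | true, μ =>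
    if μ.count 2 = 0 then 1 ::ₘ 1 ::ₘ μ
    else if μ.count 2 = 1 then
      1 ::ₘ (μ.count 1 + 3) ::ₘ (replicate (μ.count 3) 3 + replicate (μ.count 4) 4 + bigF μ)
    else if μ.count 2 = 2 then
      (μ.count 1 + 6) ::ₘ (replicate (μ.count 3) 3 + replicate (μ.count 4) 4 + bigF μ)
    else if μ.count 2 = 3 then
      replicate (μ.count 1) 1 + replicate (μ.count 3) 3 + replicate (μ.count 4 + 2) 4
    else if μ.count 1 ≤ 1 then
      replicate (μ.count 1) 1 + replicate (μ.count 3 + 2) 3 + replicate 1 4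
    else
      replicate (μ.count 1 - 2) 1 + replicate (μ.count 3 + 4) 3

lemma mem_bigF {M : Multiset ℕ} {i : ℕ} : i ∈ bigF M ↔ i ∈ M ∧ 6 ≤ i := by
  simp [bigF, mem_filter]

lemma count_bigF_small {M : Multiset ℕ} {x : ℕ} (hx : x < 6) : (bigF M).count x = 0 :=
  count_eq_zero_of_notMem fun h => by have := (mem_bigF.mp h).2; omega

lemma count_erase_bigF_small (M : Multiset ℕ) (q : ℕ) {x : ℕ} (hx : x < 6) :
    ((bigF M).erase q).count x = 0 :=
  count_eq_zero_of_notMem fun h => by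
    have := (mem_bigF.mp (mem_of_mem_erase h)).2; omega

lemma decomp {M : Multiset ℕ} (hpos : ∀ i ∈ M, 0 < i) (h5 : ∀ i ∈ M, ¬ 5 ∣ i)
    (h2 : M.count 2 = 0) :
    M = replicate (M.count 1) 1 + replicate (M.count 3) 3 + replicate (M.count 4) 4
      + bigF M := by
  ext x
  rw [count_add, count_add, count_add, count_replicate, count_replicate, count_replicate]
  rcases Nat.lt_or_ge x 6 with hx | hx
  · interval_cases x
    · have h0 : M.count 0 = 0 := count_eq_zero_of_notMem fun h => by
        have := hpos 0 h; omega
      simp [h0, count_bigF_small, hx]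
    · simp [count_bigF_small]
    · simp [h2, count_bigF_small]
    · simp [count_bigF_small]
    · simp [count_bigF_small]
    · have h0 : M.count 5 = 0 := count_eq_zero_of_notMem fun h => h5 5 h ⟨1, rfl⟩
      simp [h0, count_bigF_small]
  · have hbig : (bigF M).count x = M.count x := by
      rw [bigF, count_filter, if_pos hx]
    rw [if_neg (by omega), if_neg (by omega), if_neg (by omega), hbig]
    omega

lemma bigF_replicate {k x : ℕ} (h : x < 6) : bigF (replicate k x) = 0 := by
  rw [bigF, filter_eq_nil]
  intro a ha
  rw [eq_of_mem_replicate ha]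
  omega

lemma main {n : ℕ} (hn : 75 ≤ n) {M : Multiset ℕ} (hpos : ∀ i ∈ M, 0 < i)
    (h5 : ∀ i ∈ M, ¬ 5 ∣ i) (hsum : M.sum = n + 2) :
    dec (encT M) (encM M) = M ∧ (encM M).sum = n ∧ (∀ i ∈ encM M, 0 < i) ∧
      (∀ i ∈ encM M, ¬ 5 ∣ i) ∧
      (encT M = true → (encM M).count 2 = 1 →
        ∃ q, q ∈ M ∧ 6 ≤ q ∧ (encM M).count 1 + 3 = q) := by
  by_cases h2 : M.count 2 = 0
  case neg =>
    have hmem : (2:ℕ) ∈ M := count_pos.mp (Nat.pos_of_ne_zero h2)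
    have hT : encT M = false := by simp [encT, h2]
    have hE : encM M = M.erase 2 := by rw [encM, if_pos h2]
    have hce : (2:ℕ) ::ₘ M.erase 2 = M := cons_erase hmem
    refine ⟨?_, ?_, ?_, ?_, ?_⟩
    · rw [hT, hE]; simp only [dec]; exact hce
    · have := congrArg Multiset.sum hce
      rw [sum_cons] at this
      rw [hE]; omega
    · intro i hi; rw [hE] at hi; exact hpos i (mem_of_mem_erase hi)
    · intro i hi; rw [hE] at hi; exact h5 i (mem_of_mem_erase hi)
    · intro h; rw [hT] at h; exact absurd h (by simp)
  case pos =>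
    have hT : encT M = true := by simp [encT, h2]
    rw [hT]
    have hdec := decomp hpos h5 h2
    have hsum2 : M.count 1 + 3 * M.count 3 + 4 * M.count 4 + (bigF M).sum = n + 2 := by
      have e := congrArg Multiset.sum hdec
      simp only [sum_add, sum_replicate, smul_eq_mul] at e
      omega
    by_cases h1 : 2 ≤ M.count 1
    · -- case B : at least two parts equal to 1
      have hmem1 : (1:ℕ) ∈ M := by rw [← count_pos]; omega
      have hmem1' : (1:ℕ) ∈ M.erase 1 := by
        rw [← count_pos, count_erase_self]; omega
      have hE : encM M = (M.erase 1).erase 1 := by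
        rw [encM, if_neg (fun h => h h2), if_pos h1]
      have hce2 : (1:ℕ) ::ₘ (M.erase 1).erase 1 = M.erase 1 := cons_erase hmem1'
      have hce1 : (1:ℕ) ::ₘ M.erase 1 = M := cons_erase hmem1
      have hc2 : ((M.erase 1).erase 1).count 2 = 0 := by
        rw [count_erase_of_ne (by norm_num), count_erase_of_ne (by norm_num)]; exact h2
      refine ⟨?_, ?_, ?_, ?_, ?_⟩
      · rw [hE]; simp only [dec]; rw [if_pos hc2, hce2, hce1]
      · have e1 := congrArg Multiset.sum hce1
        have e2 := congrArg Multiset.sum hce2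
        rw [sum_cons] at e1 e2
        rw [hE]; omega
      · intro i hi; rw [hE] at hi
        exact hpos i (mem_of_mem_erase (mem_of_mem_erase hi))
      · intro i hi; rw [hE] at hi
        exact h5 i (mem_of_mem_erase (mem_of_mem_erase hi))
      · intro _ hcc; rw [hE] at hcc; omega
    · by_cases hQ : bigF M ≠ 0
      · -- dig cases
        have hqmem : qm M ∈ bigF M := by
          have hne : {x | x ∈ bigF M}.Nonempty := by
            rcases exists_mem_of_ne_zero hQ with ⟨x, hx⟩; exact ⟨x, hx⟩
          exact Nat.sInf_mem hne
        obtain ⟨hqM, hq6⟩ := mem_bigF.mp hqmem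
        have hceq : qm M ::ₘ (bigF M).erase (qm M) = bigF M := cons_erase hqmem
        have hsq : ((bigF M).erase (qm M)).sum + qm M = (bigF M).sum := by
          have := congrArg Multiset.sum hceq; rw [sum_cons] at this; omega
        have herase_ok : ∀ j ∈ (bigF M).erase (qm M), j ∈ M ∧ 6 ≤ j :=
          fun j hj => mem_bigF.mp (mem_of_mem_erase hj)
        have hbig_self : bigF ((bigF M).erase (qm M)) = (bigF M).erase (qm M) := by
          rw [bigF, filter_eq_self]
          exact fun a ha => (herase_ok a ha).2
        have he1 : ((bigF M).erase (qm M)).count 1 = 0 :=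
          count_erase_bigF_small M (qm M) (show (1:ℕ) < 6 by norm_num)
        have he2 : ((bigF M).erase (qm M)).count 2 = 0 :=
          count_erase_bigF_small M (qm M) (show (2:ℕ) < 6 by norm_num)
        have he3 : ((bigF M).erase (qm M)).count 3 = 0 :=
          count_erase_bigF_small M (qm M) (show (3:ℕ) < 6 by norm_num)
        have he4 : ((bigF M).erase (qm M)).count 4 = 0 :=
          count_erase_bigF_small M (qm M) (show (4:ℕ) < 6 by norm_num)
        by_cases ha : M.count 1 = 1
        · -- dig, one part equal to 1
          have hE : encM M =
              replicate (qm M - 3) 1 + replicate 1 2 + replicate (M.count 3) 3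
                + replicate (M.count 4) 4 + (bigF M).erase (qm M) := by
            rw [encM, if_neg (fun h => h h2), if_neg h1, if_pos hQ, if_pos ha]
          have hc1 : (encM M).count 1 = qm M - 3 := by
            rw [hE]
            simp [count_add, count_replicate, he1, he2, he3, he4]
          have hc2 : (encM M).count 2 = 1 := by
            rw [hE]
            simp [count_add, count_replicate, he1, he2, he3, he4]
          have hc3 : (encM M).count 3 = M.count 3 := by
            rw [hE]
            simp [count_add, count_replicate, he1, he2, he3, he4]
          have hc4 : (encM M).count 4 = M.count 4 := by
            rw [hE]
            simp [count_add, count_replicate, he1, he2, he3, he4]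
          have hbigμ : bigF (encM M) = (bigF M).erase (qm M) := by
            rw [hE, bigF, filter_add, filter_add, filter_add, filter_add,
              ← bigF, ← bigF, ← bigF, ← bigF, ← bigF,
              bigF_replicate (by norm_num), bigF_replicate (by norm_num),
              bigF_replicate (by norm_num), bigF_replicate (by norm_num), hbig_self]
            simp
          refine ⟨?_, ?_, ?_, ?_, ?_⟩
          · simp only [dec]
            rw [hc2, hc1, hc3, hc4, hbigμ]
            norm_num
            rw [show qm M - 3 + 3 = qm M by omega]
            conv_rhs => rw [hdec, ← hceq]
            ext x
            simp only [count_cons, count_add, count_replicate, ha]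
            split_ifs <;> omega
          · rw [hE]
            simp only [sum_add, sum_replicate, smul_eq_mul]
            omega
          · intro i hi; rw [hE] at hi
            simp only [mem_add, mem_replicate] at hi
            rcases hi with ((((⟨-,rfl⟩|⟨-,rfl⟩)|⟨-,rfl⟩)|⟨-,rfl⟩)|h)
            · norm_num
            · norm_num
            · norm_num
            · norm_num
            · exact hpos i (herase_ok i h).1
          · intro i hi; rw [hE] at hi
            simp only [mem_add, mem_replicate] at hi
            rcases hi with ((((⟨-,rfl⟩|⟨-,rfl⟩)|⟨-,rfl⟩)|⟨-,rfl⟩)|h)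
            · decide
            · decide
            · decide
            · decide
            · exact h5 i (herase_ok i h).1
          · intro _ _
            exact ⟨qm M, hqM, hq6, by rw [hc1]; omega⟩
        · -- dig, no part equal to 1
          have ha0 : M.count 1 = 0 := by omega
          have hE : encM M =
              replicate (qm M - 6) 1 + replicate 2 2 + replicate (M.count 3) 3
                + replicate (M.count 4) 4 + (bigF M).erase (qm M) := by
            rw [encM, if_neg (fun h => h h2), if_neg h1, if_pos hQ, if_neg ha]
          have hc1 : (encM M).count 1 = qm M - 6 := by
            rw [hE]
            simp [count_add, count_replicate, he1, he2, he3, he4]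
          have hc2 : (encM M).count 2 = 2 := by
            rw [hE]
            simp [count_add, count_replicate, he1, he2, he3, he4]
          have hc3 : (encM M).count 3 = M.count 3 := by
            rw [hE]
            simp [count_add, count_replicate, he1, he2, he3, he4]
          have hc4 : (encM M).count 4 = M.count 4 := by
            rw [hE]
            simp [count_add, count_replicate, he1, he2, he3, he4]
          have hbigμ : bigF (encM M) = (bigF M).erase (qm M) := by
            rw [hE, bigF, filter_add, filter_add, filter_add, filter_add,
              ← bigF, ← bigF, ← bigF, ← bigF, ← bigF,
              bigF_replicate (by norm_num), bigF_replicate (by norm_num),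
              bigF_replicate (by norm_num), bigF_replicate (by norm_num), hbig_self]
            simp
          refine ⟨?_, ?_, ?_, ?_, ?_⟩
          · simp only [dec]
            rw [hc2, hc1, hc3, hc4, hbigμ]
            norm_num
            rw [show qm M - 6 + 6 = qm M by omega]
            conv_rhs => rw [hdec, ← hceq]
            ext x
            simp only [count_cons, count_add, count_replicate, ha0]
            split_ifs <;> omega
          · rw [hE]
            simp only [sum_add, sum_replicate, smul_eq_mul]
            omega
          · intro i hi; rw [hE] at hi
            simp only [mem_add, mem_replicate] at hi
            rcases hi with ((((⟨-,rfl⟩|⟨-,rfl⟩)|⟨-,rfl⟩)|⟨-,rfl⟩)|h)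
            · norm_num
            · norm_num
            · norm_num
            · norm_num
            · exact hpos i (herase_ok i h).1
          · intro i hi; rw [hE] at hi
            simp only [mem_add, mem_replicate] at hi
            rcases hi with ((((⟨-,rfl⟩|⟨-,rfl⟩)|⟨-,rfl⟩)|⟨-,rfl⟩)|h)
            · decide
            · decide
            · decide
            · decide
            · exact h5 i (herase_ok i h).1
          · intro _ hcc; rw [hc2] at hcc; omega
      · -- no big parts
        have hQ0 : bigF M = 0 := by push_neg at hQ; exact hQ
        have hS0 : (bigF M).sum = 0 := by rw [hQ0]; rfl
        have hdec0 : M = replicate (M.count 1) 1 + replicate (M.count 3) 3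
            + replicate (M.count 4) 4 := by
          conv_lhs => rw [hdec, hQ0]
          rw [add_zero]
        by_cases hd : 2 ≤ M.count 4
        · have hE : encM M = replicate (M.count 1) 1 + replicate 3 2
              + replicate (M.count 3) 3 + replicate (M.count 4 - 2) 4 := by
            rw [encM, if_neg (fun h => h h2), if_neg h1, if_neg (fun h => h hQ0), if_pos hd]
          have hc1 : (encM M).count 1 = M.count 1 := by
            rw [hE]; simp [count_add, count_replicate]
          have hc2 : (encM M).count 2 = 3 := by
            rw [hE]; simp [count_add, count_replicate]
          have hc3 : (encM M).count 3 = M.count 3 := by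
            rw [hE]; simp [count_add, count_replicate]
          have hc4 : (encM M).count 4 = M.count 4 - 2 := by
            rw [hE]; simp [count_add, count_replicate]
          refine ⟨?_, ?_, ?_, ?_, ?_⟩
          · simp only [dec]
            rw [hc2, hc1, hc3, hc4]
            norm_num
            conv_rhs => rw [hdec0]
            ext x
            simp only [count_cons, count_add, count_replicate, count_singleton]
            split_ifs <;> omega
          · rw [hE]
            simp only [sum_add, sum_replicate, smul_eq_mul]
            omega
          · intro i hi; rw [hE] at hi
            simp only [mem_add, mem_replicate] at hi
            rcases hi with (((⟨-,rfl⟩|⟨-,rfl⟩)|⟨-,rfl⟩)|⟨-,rfl⟩) <;> norm_num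
          · intro i hi; rw [hE] at hi
            simp only [mem_add, mem_replicate] at hi
            rcases hi with (((⟨-,rfl⟩|⟨-,rfl⟩)|⟨-,rfl⟩)|⟨-,rfl⟩) <;> decide
          · intro _ hcc; rw [hc2] at hcc; omega
        · by_cases hd1 : M.count 4 = 1
          · have hC : 2 ≤ M.count 3 := by omega
            have hE : encM M = replicate (M.count 1) 1 + replicate 4 2
                + replicate (M.count 3 - 2) 3 := by
              rw [encM, if_neg (fun h => h h2), if_neg h1, if_neg (fun h => h hQ0),
                if_neg hd, if_pos hd1]
            have hc1 : (encM M).count 1 = M.count 1 := by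
              rw [hE]; simp [count_add, count_replicate]
            have hc2 : (encM M).count 2 = 4 := by
              rw [hE]; simp [count_add, count_replicate]
            have hc3 : (encM M).count 3 = M.count 3 - 2 := by
              rw [hE]; simp [count_add, count_replicate]
            refine ⟨?_, ?_, ?_, ?_, ?_⟩
            · simp only [dec]
              rw [hc2, hc1, hc3]
              norm_num
              rw [if_pos (show M.count 1 ≤ 1 by omega)]
              conv_rhs => rw [hdec0]
              ext x
              simp only [count_cons, count_add, count_replicate, count_singleton]
              split_ifs <;> omega
            · rw [hE]
              simp only [sum_add, sum_replicate, smul_eq_mul]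
              omega
            · intro i hi; rw [hE] at hi
              simp only [mem_add, mem_replicate] at hi
              rcases hi with ((⟨-,rfl⟩|⟨-,rfl⟩)|⟨-,rfl⟩) <;> norm_num
            · intro i hi; rw [hE] at hi
              simp only [mem_add, mem_replicate] at hi
              rcases hi with ((⟨-,rfl⟩|⟨-,rfl⟩)|⟨-,rfl⟩) <;> decide
            · intro _ hcc; rw [hc2] at hcc; omega
          · have hd0 : M.count 4 = 0 := by omega
            have hC : 4 ≤ M.count 3 := by omega
            have hE : encM M = replicate (M.count 1 + 2) 1 + replicate 4 2
                + replicate (M.count 3 - 4) 3 := by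
              rw [encM, if_neg (fun h => h h2), if_neg h1, if_neg (fun h => h hQ0),
                if_neg hd, if_neg hd1]
            have hc1 : (encM M).count 1 = M.count 1 + 2 := by
              rw [hE]; simp [count_add, count_replicate]
            have hc2 : (encM M).count 2 = 4 := by
              rw [hE]; simp [count_add, count_replicate]
            have hc3 : (encM M).count 3 = M.count 3 - 4 := by
              rw [hE]; simp [count_add, count_replicate]
            refine ⟨?_, ?_, ?_, ?_, ?_⟩
            · simp only [dec]
              rw [hc2, hc1, hc3]
              norm_num
              rw [if_neg (show ¬ M.count 1 + 2 ≤ 1 by omega)]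
              conv_rhs => rw [hdec0]
              ext x
              simp only [count_cons, count_add, count_replicate, count_singleton]
              split_ifs <;> omega
            · rw [hE]
              simp only [sum_add, sum_replicate, smul_eq_mul]
              omega
            · intro i hi; rw [hE] at hi
              simp only [mem_add, mem_replicate] at hi
              rcases hi with ((⟨-,rfl⟩|⟨-,rfl⟩)|⟨-,rfl⟩) <;> norm_num
            · intro i hi; rw [hE] at hi
              simp only [mem_add, mem_replicate] at hi
              rcases hi with ((⟨-,rfl⟩|⟨-,rfl⟩)|⟨-,rfl⟩) <;> decide
            · intro _ hcc; rw [hc2] at hcc; omega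

end P5Aux

theorem p5_add_two_lt (b : ℕ) (hb : 75 ≤ b) : pk 5 (b + 2) < 2 * pk 5 b := by
  classical
  let f : {μ : (b+2).Partition // ∀ i ∈ μ.parts, ¬ 5 ∣ i} →
      Bool × {μ : b.Partition // ∀ i ∈ μ.parts, ¬ 5 ∣ i} := fun μ =>
    (P5Aux.encT μ.1.parts,
      ⟨⟨P5Aux.encM μ.1.parts,
        fun {i} hi =>
          (P5Aux.main hb (fun i hi => μ.1.parts_pos hi) μ.2 μ.1.parts_sum).2.2.1 i hi,
        (P5Aux.main hb (fun i hi => μ.1.parts_pos hi) μ.2 μ.1.parts_sum).2.1⟩,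
        (P5Aux.main hb (fun i hi => μ.1.parts_pos hi) μ.2 μ.1.parts_sum).2.2.2.1⟩)
  have hinj : Function.Injective f := by
    intro x y hxy
    have hx := (P5Aux.main hb (fun i hi => x.1.parts_pos hi) x.2 x.1.parts_sum).1
    have hy := (P5Aux.main hb (fun i hi => y.1.parts_pos hi) y.2 y.1.parts_sum).1
    have h1 : P5Aux.encT x.1.parts = P5Aux.encT y.1.parts := congrArg Prod.fst hxy
    have h2 : P5Aux.encM x.1.parts = P5Aux.encM y.1.parts :=
      congrArg (fun p => p.2.1.parts) hxy
    have hparts : x.1.parts = y.1.parts := by rw [← hx, ← hy, h1, h2]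
    exact Subtype.ext (Nat.Partition.ext hparts)
  -- the missing element
  have hr : ∃ r : Multiset ℕ, r.sum = b - 4 ∧ ∀ i ∈ r, 6 ≤ i ∧ ¬ 5 ∣ i := by
    by_cases h : 5 ∣ (b - 4)
    · refine ⟨{6, b - 10}, ?_, ?_⟩
      · simp; omega
      · intro i hi
        rcases Multiset.mem_cons.mp hi with rfl | hi
        · exact ⟨by norm_num, by decide⟩
        · rw [Multiset.mem_singleton] at hi
          subst hi
          exact ⟨by omega, by omega⟩
    · exact ⟨{b - 4}, by simp, fun i hi => by
        rw [Multiset.mem_singleton] at hi; subst hi; exact ⟨by omega, h⟩⟩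
  obtain ⟨r, hrsum, hrbig⟩ := hr
  have h2r : (2:ℕ) ∉ r := fun h => by have := (hrbig 2 h).1; omega
  have h1r : (1:ℕ) ∉ r := fun h => by have := (hrbig 1 h).1; omega
  let M0 : Multiset ℕ := 1 ::ₘ 1 ::ₘ 2 ::ₘ r
  have hM0sum : M0.sum = b := by
    show (1 ::ₘ 1 ::ₘ 2 ::ₘ r).sum = b
    rw [Multiset.sum_cons, Multiset.sum_cons, Multiset.sum_cons, hrsum]
    omega
  have hM0pos : ∀ i ∈ M0, 0 < i := by
    intro i hi
    rcases Multiset.mem_cons.mp hi with rfl | hi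
    · norm_num
    rcases Multiset.mem_cons.mp hi with rfl | hi
    · norm_num
    rcases Multiset.mem_cons.mp hi with rfl | hi
    · norm_num
    · have := (hrbig i hi).1; omega
  have hM0reg : ∀ i ∈ M0, ¬ 5 ∣ i := by
    intro i hi
    rcases Multiset.mem_cons.mp hi with rfl | hi
    · decide
    rcases Multiset.mem_cons.mp hi with rfl | hi
    · decide
    rcases Multiset.mem_cons.mp hi with rfl | hi
    · decide
    · exact (hrbig i hi).2
  have hM0c2 : M0.count 2 = 1 := by
    show (1 ::ₘ 1 ::ₘ 2 ::ₘ r).count 2 = 1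
    rw [Multiset.count_cons_of_ne (by norm_num), Multiset.count_cons_of_ne (by norm_num),
      Multiset.count_cons_self, Multiset.count_eq_zero_of_notMem h2r]
  have hM0c1 : M0.count 1 = 2 := by
    show (1 ::ₘ 1 ::ₘ 2 ::ₘ r).count 1 = 2
    rw [Multiset.count_cons_self, Multiset.count_cons_self,
      Multiset.count_cons_of_ne (by norm_num), Multiset.count_eq_zero_of_notMem h1r]
  let y0 : Bool × {μ : b.Partition // ∀ i ∈ μ.parts, ¬ 5 ∣ i} :=
    (true, ⟨⟨M0, fun {i} hi => hM0pos i hi, hM0sum⟩, hM0reg⟩)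
  have hnot : y0 ∉ Set.range f := by
    rintro ⟨x, hx⟩
    have h := P5Aux.main hb (fun i hi => x.1.parts_pos hi) x.2 x.1.parts_sum
    have hT : P5Aux.encT x.1.parts = true := (congrArg Prod.fst hx :)
    have hM : P5Aux.encM x.1.parts = M0 := (congrArg (fun p => p.2.1.parts) hx :)
    obtain ⟨q, hqM, hq6, hq⟩ := h.2.2.2.2 hT (by rw [hM]; exact hM0c2)
    rw [hM, hM0c1] at hq
    exact x.2 q hqM (by omega)
  have hcard := Fintype.card_lt_of_injective_of_notMem f hinj hnot
  rw [Fintype.card_prod, Fintype.card_bool] at hcard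
  unfold pk
  convert hcard using 2
end

section
/- For every integer n ≥ 2 with n ≠ 3: if n is even then maxp_3(n) = 2^(n/2), and if n is odd then maxp_3(n) = 5 · 2^((n-5)/2). -/
/-- Extension of `pk k` to partitions: the product of `pk k` over the parts. -/
noncomputable def pkext (k : ℕ) {n : ℕ} (μ : n.Partition) : ℕ :=
  (μ.parts.map (pk k)).prod

def fb : ℕ → ℕ := fun n =>
  if n % 2 = 0 then 2 ^ (n / 2) else if n = 1 then 1 else if n = 3 then 2
  else 5 * 2 ^ ((n - 5) / 2)

lemma fb_even {n : ℕ} (h : n % 2 = 0) : fb n = 2 ^ (n / 2) := by simp [fb, h]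

lemma fb_odd {n : ℕ} (h : n % 2 = 1) (h5 : 5 ≤ n) : fb n = 5 * 2 ^ ((n - 5) / 2) := by
  have h1 : n ≠ 1 := by omega
  have h3 : n ≠ 3 := by omega
  simp [fb, h, h1, h3]

lemma one_le_fb (n : ℕ) : 1 ≤ fb n := by
  rcases Nat.even_or_odd n with ⟨i, rfl⟩ | ⟨i, rfl⟩
  · rw [fb_even (by omega)]; exact Nat.one_le_two_pow
  · rcases (by omega : 2*i+1 = 1 ∨ 2*i+1 = 3 ∨ 5 ≤ 2*i+1) with h | h | h5
    · rw [h]; decide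
    · rw [h]; decide
    · rw [fb_odd (by omega) h5]
      have := Nat.one_le_two_pow (n := (2*i+1-5)/2); omega

lemma fb_mul_le_aux : ∀ a b : ℕ, a ≤ b → fb a * fb b ≤ fb (a + b) := by
  have hp : ∀ k : ℕ, 1 ≤ 2 ^ k := fun k => Nat.one_le_two_pow
  intro a b hab
  rcases Nat.even_or_odd a with ⟨i, rfl⟩ | ⟨i, rfl⟩ <;>
    rcases Nat.even_or_odd b with ⟨j, rfl⟩ | ⟨j, rfl⟩
  · -- even even
    rw [fb_even (by omega), fb_even (by omega), fb_even (by omega),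
      show (i+i)/2 = i by omega, show (j+j)/2 = j by omega,
      show (i+i+(j+j))/2 = i + j by omega, pow_add]
  · -- even odd
    rcases j with _ | _ | j
    · -- b = 1, so i + i ≤ 1, i = 0
      have : i = 0 := by omega
      subst this; decide
    · -- b = 3
      rcases i with _ | i
      · decide
      · rw [fb_even (by omega), show fb (2*1+1) = 2 by decide,
          fb_odd (by omega) (by omega),
          show (i+1+(i+1))/2 = i+1 by omega, show (i+1+(i+1)+(2*1+1)-5)/2 = i by omega,
          pow_succ]
        nlinarith [hp i]
    · -- b = 2j+5
      rw [fb_even (by omega), fb_odd (by omega) (by omega), fb_odd (by omega) (by omega),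
        show (i+i)/2 = i by omega, show (2*(j+2)+1-5)/2 = j by omega,
        show (i+i+(2*(j+2)+1)-5)/2 = i + j by omega, pow_add]
      ring_nf; omega
  · -- odd even
    rcases i with _ | _ | i
    · -- a = 1
      rw [show fb (2*0+1) = 1 by decide, one_mul]
      rcases j with _ | _ | j
      · decide
      · decide
      · rw [fb_even (by omega), fb_odd (by omega) (by omega),
          show (j+2+(j+2))/2 = j+2 by omega, show (2*0+1+(j+2+(j+2))-5)/2 = j by omega,
          show j+2 = (j+1)+1 by omega, pow_succ, pow_succ]
        nlinarith [hp j]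
    · -- a = 3
      rcases j with _ | _ | j
      · omega
      · omega
      · rw [show fb (2*1+1) = 2 by decide, fb_even (by omega),
          fb_odd (by omega) (by omega),
          show (j+2+(j+2))/2 = j+2 by omega, show (2*1+1+(j+2+(j+2))-5)/2 = j+1 by omega,
          show j+2 = (j+1)+1 by omega, pow_succ]
        nlinarith [hp (j+1)]
    · -- a = 2i+5
      rw [fb_odd (by omega) (by omega), fb_even (by omega), fb_odd (by omega) (by omega),
        show (2*(i+2)+1-5)/2 = i by omega, show (j+j)/2 = j by omega,
        show (2*(i+2)+1+(j+j)-5)/2 = i+j by omega, pow_add]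
      ring_nf; omega
  · -- odd odd
    rcases i with _ | _ | i
    · -- a = 1
      rw [show fb (2*0+1) = 1 by decide, one_mul]
      rcases j with _ | _ | j
      · decide
      · decide
      · rw [fb_odd (by omega) (by omega), fb_even (by omega),
          show (2*(j+2)+1-5)/2 = j by omega,
          show (2*0+1+(2*(j+2)+1))/2 = j+3 by omega,
          show j+3 = j+1+1+1 by omega, pow_succ, pow_succ, pow_succ]
        nlinarith [hp j]
    · -- a = 3
      rcases j with _ | _ | j
      · omega
      · decide
      · rw [show fb (2*1+1) = 2 by decide, fb_odd (by omega) (by omega), fb_even (by omega),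
          show (2*(j+2)+1-5)/2 = j by omega,
          show (2*1+1+(2*(j+2)+1))/2 = j+4 by omega,
          show j+4 = j+1+1+1+1 by omega, pow_succ, pow_succ, pow_succ, pow_succ]
        nlinarith [hp j]
    · -- a = 2i+5, b = 2j+5
      rcases j with _ | _ | j
      · omega
      · omega
      · rw [fb_odd (by omega) (by omega), fb_odd (by omega) (by omega), fb_even (by omega),
          show (2*(i+2)+1-5)/2 = i by omega, show (2*(j+2)+1-5)/2 = j by omega,
          show (2*(i+2)+1+(2*(j+2)+1))/2 = i+j+5 by omega,
          show i+j+5 = (i+j)+5 by omega]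
        calc 5 * 2^i * (5 * 2^j) = 25 * 2^(i+j) := by rw [pow_add]; ring
          _ ≤ 32 * 2^(i+j) := by nlinarith [hp (i+j)]
          _ = 2^(i+j+5) := by rw [pow_add]; ring

lemma fb_mul_le (a b : ℕ) : fb a * fb b ≤ fb (a + b) := by
  rcases le_total a b with h | h
  · exact fb_mul_le_aux a b h
  · rw [mul_comm, add_comm]; exact fb_mul_le_aux b a h

def Fs (n : ℕ) : Finset ℕ := (Finset.Ico 4 (n+1)).filter (fun a => ¬ 3 ∣ a)

lemma arith (n : ℕ) (h : 10 ≤ n) : fb (n-3) + fb (n-4) + fb (n-5) + 2 ≤ fb n := by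
  have hp : ∀ k : ℕ, 1 ≤ 2 ^ k := fun k => Nat.one_le_two_pow
  rcases Nat.even_or_odd n with ⟨i, rfl⟩ | ⟨i, rfl⟩
  · -- n = 2i, i ≥ 5
    obtain ⟨k, rfl⟩ : ∃ k, i = k + 5 := ⟨i - 5, by omega⟩
    have A : fb (k+5+(k+5)-3) = 5*2^(k+1) := by
      rw [show k+5+(k+5)-3 = 2*(k+1)+5 by omega, fb_odd (by omega) (by omega),
        show (2*(k+1)+5-5)/2 = k+1 by omega]
    have B : fb (k+5+(k+5)-4) = 8*2^k := by
      rw [show k+5+(k+5)-4 = 2*(k+3) by omega, fb_even (by omega),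
        show (2*(k+3))/2 = k+3 by omega]
      ring
    have C : fb (k+5+(k+5)-5) = 5*2^k := by
      rw [show k+5+(k+5)-5 = 2*k+5 by omega, fb_odd (by omega) (by omega),
        show (2*k+5-5)/2 = k by omega]
    have D : fb (k+5+(k+5)) = 32*2^k := by
      rw [fb_even (by omega), show (k+5+(k+5))/2 = k+5 by omega]
      ring
    rw [A, B, C, D, show (5:ℕ)*2^(k+1) = 10*2^k by ring]
    have := hp k; nlinarith
  · -- n = 2i+1, i ≥ 5
    obtain ⟨k, rfl⟩ : ∃ k, i = k + 5 := ⟨i - 5, by omega⟩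
    have A : fb (2*(k+5)+1-3) = 16*2^k := by
      rw [show 2*(k+5)+1-3 = 2*(k+4) by omega, fb_even (by omega),
        show (2*(k+4))/2 = k+4 by omega]
      ring
    have B : fb (2*(k+5)+1-4) = 10*2^k := by
      rw [show 2*(k+5)+1-4 = 2*(k+1)+5 by omega, fb_odd (by omega) (by omega),
        show (2*(k+1)+5-5)/2 = k+1 by omega]
      ring
    have C : fb (2*(k+5)+1-5) = 8*2^k := by
      rw [show 2*(k+5)+1-5 = 2*(k+3) by omega, fb_even (by omega),
        show (2*(k+3))/2 = k+3 by omega]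
      ring
    have D : fb (2*(k+5)+1) = 40*2^k := by
      rw [show 2*(k+5)+1 = 2*k+11 by omega, fb_odd (by omega) (by omega),
        show (2*k+11-5)/2 = k+3 by omega]
      ring
    rw [A, B, C, D]
    have := hp k; nlinarith

lemma Fs_step (n : ℕ) (h : 10 ≤ n) :
    Fs n = insert 4 (insert 5 ((Fs (n-3)).image (· + 3))) := by
  ext a
  simp only [Fs, Finset.mem_insert, Finset.mem_image, Finset.mem_filter, Finset.mem_Ico]
  constructor
  · rintro ⟨⟨h4, hlt⟩, hnd⟩
    rcases (by omega : a = 4 ∨ a = 5 ∨ 7 ≤ a) with rfl | rfl | h7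
    · exact Or.inl rfl
    · exact Or.inr (Or.inl rfl)
    · refine Or.inr (Or.inr ⟨a - 3, ⟨⟨by omega, by omega⟩, fun hd => hnd ?_⟩, by omega⟩)
      omega
  · rintro (rfl | rfl | ⟨b, ⟨⟨hb4, hblt⟩, hbnd⟩, rfl⟩)
    · exact ⟨⟨by omega, by omega⟩, by omega⟩
    · exact ⟨⟨by omega, by omega⟩, by omega⟩
    · exact ⟨⟨by omega, by omega⟩, fun hd => hbnd (by omega)⟩

lemma Blem : ∀ n : ℕ, (∑ a ∈ Fs n, fb (n - a)) + (n/2 + 1) ≤ fb n := by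
  intro n
  induction n using Nat.strong_induction_on with
  | _ n ih =>
    rcases le_or_gt n 9 with h9 | h9
    · interval_cases n <;> decide
    · have h10 : 10 ≤ n := by omega
      rw [Fs_step n h10]
      have h4 : (4:ℕ) ∉ insert 5 ((Fs (n-3)).image (· + 3)) := by
        simp only [Finset.mem_insert, Finset.mem_image]
        push_neg
        refine ⟨by omega, fun b hb => ?_⟩
        simp only [Fs, Finset.mem_filter, Finset.mem_Ico] at hb; omega
      have h5 : (5:ℕ) ∉ (Fs (n-3)).image (· + 3) := by
        simp only [Finset.mem_image]
        push_neg
        intro b hb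
        simp only [Fs, Finset.mem_filter, Finset.mem_Ico] at hb; omega
      rw [Finset.sum_insert h4, Finset.sum_insert h5,
        Finset.sum_image (by intro x _ y _ hxy; simp only at hxy; omega)]
      have hsum : ∑ b ∈ Fs (n-3), fb (n - (b + 3)) = ∑ b ∈ Fs (n-3), fb ((n-3) - b) := by
        refine Finset.sum_congr rfl fun b hb => ?_
        simp only [Fs, Finset.mem_filter, Finset.mem_Ico] at hb
        congr 1; omega
      rw [hsum]
      have hih := ih (n-3) (by omega)
      have har := arith n h10
      have hd : n/2 + 1 ≤ (n-3)/2 + 1 + 2 := by omega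
      omega

/-- The finset of part-multisets of 3-regular partitions of `n`. -/
noncomputable def Gs (n : ℕ) : Finset (Multiset ℕ) :=
  Finset.univ.image (fun μ : {μ : n.Partition // ∀ i ∈ μ.parts, ¬ 3 ∣ i} => μ.1.parts)

lemma mem_Gs {n : ℕ} {s : Multiset ℕ} :
    s ∈ Gs n ↔ s.sum = n ∧ (∀ i ∈ s, 0 < i) ∧ (∀ i ∈ s, ¬ 3 ∣ i) := by
  simp only [Gs, Finset.mem_image, Finset.mem_univ, true_and]
  constructor
  · rintro ⟨⟨⟨p, hpos, hsum⟩, hreg⟩, rfl⟩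
    exact ⟨hsum, fun i hi => hpos hi, hreg⟩
  · rintro ⟨h1, h2, h3⟩
    exact ⟨⟨⟨s, fun {i} hi => h2 i hi, h1⟩, h3⟩, rfl⟩

lemma card_Gs (n : ℕ) : (Gs n).card = pk 3 n := by
  rw [Gs, Finset.card_image_of_injective _ (fun μ ν h => Subtype.ext (Nat.Partition.ext h)),
    Finset.card_univ, pk]

lemma small_decomp {s : Multiset ℕ} (hpos : ∀ i ∈ s, 0 < i) (h : ∀ i ∈ s, i ≤ 2) :
    s = Multiset.replicate (s.count 1) 1 + Multiset.replicate (s.count 2) 2 := by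
  refine Multiset.ext.mpr fun a => ?_
  rw [Multiset.count_add, Multiset.count_replicate, Multiset.count_replicate]
  rcases (show a = 1 ∨ a = 2 ∨ (a ≠ 1 ∧ a ≠ 2) by tauto) with rfl | rfl | ⟨h1, h2⟩
  · simp
  · simp
  · have : a ∉ s := fun hm => by have := hpos a hm; have := h a hm; omega
    rw [Multiset.count_eq_zero_of_notMem this, if_neg (by omega : ¬ (1 = a)),
      if_neg (by omega : ¬ (2 = a))]

lemma core (n : ℕ) : pk 3 n ≤ (n/2 + 1) + ∑ a ∈ Fs n, pk 3 (n - a) := by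
  classical
  set S1 : Finset (Multiset ℕ) :=
    (Finset.range (n/2+1)).image
      (fun c => Multiset.replicate (n - 2*c) 1 + Multiset.replicate c 2) with hS1
  set S2 : Finset (Multiset ℕ) :=
    (Fs n).biUnion (fun a => (Gs (n-a)).image (a ::ₘ ·)) with hS2
  have hsub : Gs n ⊆ S1 ∪ S2 := by
    intro s hs
    rw [mem_Gs] at hs
    obtain ⟨hsum, hpos, hreg⟩ := hs
    rw [Finset.mem_union]
    by_cases hsmall : ∀ i ∈ s, i ≤ 2
    · left
      have hdec := small_decomp hpos hsmall
      have hsum2 : s.count 1 * 1 + s.count 2 * 2 = n := by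
        have := congrArg Multiset.sum hdec
        simp only [Multiset.sum_add, Multiset.sum_replicate, smul_eq_mul] at this
        omega
      rw [hS1, Finset.mem_image]
      refine ⟨s.count 2, Finset.mem_range.mpr (by omega), ?_⟩
      rw [show n - 2 * s.count 2 = s.count 1 by omega]
      exact hdec.symm
    · right
      push_neg at hsmall
      obtain ⟨c, hcs, hc2⟩ := hsmall
      have hcd : ¬ 3 ∣ c := hreg c hcs
      have hc3 : c ≠ 3 := by rintro rfl; exact hcd ⟨1, rfl⟩
      have hcn : c ≤ n := hsum ▸ Multiset.single_le_sum (fun x _ => Nat.zero_le x) c hcs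
      rw [hS2, Finset.mem_biUnion]
      refine ⟨c, ?_, ?_⟩
      · simp only [Fs, Finset.mem_filter, Finset.mem_Ico]
        exact ⟨⟨by omega, by omega⟩, hcd⟩
      · rw [Finset.mem_image]
        refine ⟨s.erase c, ?_, Multiset.cons_erase hcs⟩
        rw [mem_Gs]
        have hsumerase : c + (s.erase c).sum = n := by
          rw [← Multiset.sum_cons, Multiset.cons_erase hcs, hsum]
        exact ⟨by omega, fun i hi => hpos i (Multiset.mem_of_mem_erase hi),
          fun i hi => hreg i (Multiset.mem_of_mem_erase hi)⟩
  calc pk 3 n = (Gs n).card := (card_Gs n).symm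
    _ ≤ (S1 ∪ S2).card := Finset.card_le_card hsub
    _ ≤ S1.card + S2.card := Finset.card_union_le _ _
    _ ≤ (n/2+1) + ∑ a ∈ Fs n, pk 3 (n - a) := by
        refine add_le_add ?_ ?_
        · exact le_trans Finset.card_image_le (le_of_eq (Finset.card_range _))
        · refine le_trans (Finset.card_biUnion_le) (Finset.sum_le_sum fun a _ => ?_)
          exact le_trans Finset.card_image_le (le_of_eq (card_Gs _))

lemma pk_le_fb : ∀ n : ℕ, pk 3 n ≤ fb n := by
  intro n
  induction n using Nat.strong_induction_on with
  | _ n ih =>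
    have h1 := core n
    have h2 : ∑ a ∈ Fs n, pk 3 (n - a) ≤ ∑ a ∈ Fs n, fb (n - a) := by
      refine Finset.sum_le_sum fun a ha => ?_
      simp only [Fs, Finset.mem_filter, Finset.mem_Ico] at ha
      exact ih (n - a) (by omega)
    have h3 := Blem n
    omega

lemma prod_le_fb (s : Multiset ℕ) : (s.map (pk 3)).prod ≤ fb s.sum := by
  induction s using Multiset.induction_on with
  | empty => simp [fb]
  | cons a s ih =>
    rw [Multiset.map_cons, Multiset.prod_cons, Multiset.sum_cons]
    exact le_trans (Nat.mul_le_mul (pk_le_fb a) ih) (fb_mul_le a s.sum)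

lemma pk2 : pk 3 2 = 2 := by
  refine le_antisymm ?_ ?_
  · have h := pk_le_fb 2
    have : fb 2 = 2 := by decide
    omega
  · calc 2 = ({({2} : Multiset ℕ), ({1,1} : Multiset ℕ)} : Finset (Multiset ℕ)).card := by decide
      _ ≤ (Gs 2).card := by
          refine Finset.card_le_card ?_
          intro s hs
          simp only [Finset.mem_insert, Finset.mem_singleton] at hs
          rcases hs with rfl | rfl <;> rw [mem_Gs] <;>
            exact ⟨by decide, by decide, by decide⟩
      _ = pk 3 2 := card_Gs 2

lemma pk5 : pk 3 5 = 5 := by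
  refine le_antisymm ?_ ?_
  · have h := pk_le_fb 5
    have : fb 5 = 5 := by decide
    omega
  · calc 5 = ({({5} : Multiset ℕ), ({4,1} : Multiset ℕ), ({2,2,1} : Multiset ℕ),
        ({2,1,1,1} : Multiset ℕ), ({1,1,1,1,1} : Multiset ℕ)} : Finset (Multiset ℕ)).card := by
          decide
      _ ≤ (Gs 5).card := by
          refine Finset.card_le_card ?_
          intro s hs
          simp only [Finset.mem_insert, Finset.mem_singleton] at hs
          rcases hs with rfl | rfl | rfl | rfl | rfl <;> rw [mem_Gs] <;>
            exact ⟨by decide, by decide, by decide⟩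
      _ = pk 3 5 := card_Gs 5

theorem maxp3_formula (n : ℕ) (hn : 2 ≤ n) (hne : n ≠ 3) :
    (n % 2 = 0 →
      IsGreatest {m : ℕ | ∃ μ : n.Partition, (∀ i ∈ μ.parts, ¬ 3 ∣ i) ∧ pkext 3 μ = m}
        (2 ^ (n / 2))) ∧
    (n % 2 = 1 →
      IsGreatest {m : ℕ | ∃ μ : n.Partition, (∀ i ∈ μ.parts, ¬ 3 ∣ i) ∧ pkext 3 μ = m}
        (5 * 2 ^ ((n - 5) / 2))) := by
  constructor
  · intro h2
    constructor
    · refine ⟨⟨Multiset.replicate (n/2) 2, ?_, ?_⟩, ?_, ?_⟩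
      · intro i hi
        rw [Multiset.eq_of_mem_replicate hi]; omega
      · rw [Multiset.sum_replicate, smul_eq_mul]; omega
      · intro i hi
        rw [Multiset.eq_of_mem_replicate hi]; decide
      · show ((Multiset.replicate (n/2) 2).map (pk 3)).prod = 2 ^ (n/2)
        rw [Multiset.map_replicate, Multiset.prod_replicate, pk2]
    · rintro m ⟨μ, hreg, rfl⟩
      have h := prod_le_fb μ.parts
      rw [μ.parts_sum, fb_even h2] at h
      exact h
  · intro h2
    have h5 : 5 ≤ n := by omega
    constructor
    · refine ⟨⟨5 ::ₘ Multiset.replicate ((n-5)/2) 2, ?_, ?_⟩, ?_, ?_⟩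
      · intro i hi
        rcases Multiset.mem_cons.mp (show i ∈ 5 ::ₘ Multiset.replicate ((n-5)/2) 2 from hi)
          with rfl | hi'
        · omega
        · rw [Multiset.eq_of_mem_replicate hi']; omega
      · rw [Multiset.sum_cons, Multiset.sum_replicate, smul_eq_mul]; omega
      · intro i hi
        rcases Multiset.mem_cons.mp (show i ∈ 5 ::ₘ Multiset.replicate ((n-5)/2) 2 from hi)
          with rfl | hi'
        · decide
        · rw [Multiset.eq_of_mem_replicate hi']; decide
      · show ((5 ::ₘ Multiset.replicate ((n-5)/2) 2).map (pk 3)).prod = 5 * 2 ^ ((n-5)/2)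
        rw [Multiset.map_cons, Multiset.prod_cons, Multiset.map_replicate,
          Multiset.prod_replicate, pk2, pk5]
    · rintro m ⟨μ, hreg, rfl⟩
      have h := prod_le_fb μ.parts
      rw [μ.parts_sum, fb_odd h2 h5] at h
      exact h
end

section
/- For every integer n ≥ 2: maxp_4(n) = 3^(n/3) if n ≡ 0 (mod 3), maxp_4(n) = 4 · 3^((n-4)/3) if n ≡ 1 (mod 3), and maxp_4(n) = 2 · 3^((n-2)/3) if n ≡ 2 (mod 3). -/
def F : ℕ → ℕ
  | 0 => 1
  | 1 => 1
  | 2 => 2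
  | 3 => 3
  | 4 => 4
  | (n+5) => 3 * F (n+2)

def cf : ℕ → ℕ → ℕ → ℕ
  | 0, n, _ => if n = 0 then 1 else 0
  | _+1, n, 0 => if n = 0 then 1 else 0
  | f+1, n, m+1 =>
      cf f n m + (if 4 ∣ (m+1) ∨ n < m+1 then 0 else cf f (n - (m+1)) (m+1))

def c (n m : ℕ) : ℕ := cf (n+m) n m

example : c 12 12 = 50 := by decide
example : F 12 = 81 := by decide
example : ∀ n : Fin 13, c n n ≤ F n := by decide


lemma cf_succ : ∀ f n m, n + m ≤ f → cf (f+1) n m = cf f n m := by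
  intro f
  induction f with
  | zero =>
    intro n m h
    have hn : n = 0 := by omega
    have hm : m = 0 := by omega
    subst hn; subst hm; rfl
  | succ g ih =>
    intro n m h
    match m with
    | 0 => rfl
    | m+1 =>
      show cf (g+1) n m + _ = cf g n m + _
      have h1 : cf (g+1) n m = cf g n m := ih n m (by omega)
      by_cases hc : 4 ∣ (m+1) ∨ n < m+1
      · rw [if_pos hc, if_pos hc, h1]
      · have h2 : cf (g+1) (n - (m+1)) (m+1) = cf g (n - (m+1)) (m+1) :=
          ih (n - (m+1)) (m+1) (by omega)
        simp [hc, h1, h2]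

lemma cf_fuel : ∀ f n m, n + m ≤ f → cf f n m = c n m := by
  intro f n m h
  unfold c
  induction f with
  | zero =>
    have hn : n = 0 := by omega
    have hm : m = 0 := by omega
    subst hn; subst hm; rfl
  | succ g ih =>
    rcases Nat.lt_or_ge (n+m) (g+1) with hlt | hge
    · rw [cf_succ g n m (by omega), ih (by omega)]
    · have : n + m = g + 1 := by omega
      rw [this]

lemma c_zero (n : ℕ) : c n 0 = if n = 0 then 1 else 0 := by
  unfold c
  cases n <;> rfl

lemma c_succ (n m : ℕ) :
    c n (m+1) = c n m + (if 4 ∣ (m+1) ∨ n < m+1 then 0 else c (n - (m+1)) (m+1)) := by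
  have : c n (m+1) = cf (n+(m+1)) n (m+1) := rfl
  rw [this]
  show cf (n+m+1) n (m+1) = _
  unfold cf
  rw [cf_fuel (n+m) n m (le_refl _)]
  by_cases hc : 4 ∣ (m+1) ∨ n < m+1
  · rw [if_pos hc, if_pos hc]
  · have : n - (m+1) + (m+1) ≤ n + m := by omega
    simp [hc, cf_fuel _ _ _ this]

lemma c_mono_succ (n m : ℕ) : c n m ≤ c n (m+1) := by
  rw [c_succ]; omega

lemma c_mono (n : ℕ) {m m' : ℕ} (h : m ≤ m') : c n m ≤ c n m' := by
  induction m' with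
  | zero => simp [Nat.le_zero.mp h]
  | succ k ih =>
    rcases Nat.lt_or_ge m (k+1) with h1 | h2
    · exact le_trans (ih (by omega)) (c_mono_succ n k)
    · have : m = k+1 := by omega
      simp [this]

lemma c_cap (n : ℕ) : ∀ m, n ≤ m → c n m = c n n := by
  intro m hm
  induction m with
  | zero => have : n = 0 := by omega
            simp [this]
  | succ k ih =>
    rcases Nat.lt_or_ge k n with h1 | h2
    · have : n = k+1 := by omega
      simp [this]
    · rw [c_succ]
      have : 4 ∣ (k+1) ∨ n < k+1 := Or.inr (by omega)
      rw [if_pos this, ih h2, add_zero]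

lemma c_le_diag (n m : ℕ) : c n m ≤ c n n := by
  rcases le_or_gt m n with h | h
  · exact c_mono n h
  · rw [c_cap n m (by omega)]

lemma c_one (n : ℕ) : c n 1 = 1 := by
  induction n using Nat.strong_induction_on with
  | _ n ih =>
    rw [c_succ, c_zero]
    match n with
    | 0 => simp
    | k+1 =>
      have h4 : ¬ (4 ∣ 1 ∨ k+1 < 1) := by omega
      simp [h4, ih k (by omega)]

lemma c_two (n : ℕ) : c n 2 ≤ n / 2 + 1 := by
  induction n using Nat.strong_induction_on with
  | _ n ih =>
    rw [c_succ, c_one]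
    by_cases hc : 4 ∣ 2 ∨ n < 2
    · rw [if_pos hc]; omega
    · have hn : 2 ≤ n := by omega
      have := ih (n-2) (by omega)
      simp only [hc, if_false]
      norm_num
      omega

lemma F_add_three (k : ℕ) (hk : k ≠ 1) : F (k+3) = 3 * F k := by
  match k with
  | 0 => rfl
  | 1 => exact absurd rfl hk
  | (j+2) => rfl

lemma F_pos (n : ℕ) : 0 < F n := by
  induction n using Nat.strong_induction_on with
  | _ n ih =>
    match n with
    | 0 | 1 | 2 | 3 | 4 => decide
    | (j+5) =>
      have := ih (j+2) (by omega)
      show 0 < 3 * F (j+2)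
      omega

lemma F_ge_3n (n : ℕ) (hn : 9 ≤ n) : 3 * n ≤ F n := by
  induction n using Nat.strong_induction_on with
  | _ n ih =>
    match n, hn with
    | 9, _ => decide
    | 10, _ => decide
    | 11, _ => decide
    | (j+12), _ =>
      have h1 : F (j+12) = 3 * F (j+9) := F_add_three (j+9) (by omega)
      have h2 := ih (j+9) (by omega) (by omega)
      omega

lemma F_supermul : ∀ s a b, a + b ≤ s → F a * F b ≤ F (a+b) := by
  intro s
  induction s using Nat.strong_induction_on with
  | _ s ih =>
    intro a b hs
    match a, b with
    | (j+5), b =>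
      have h1 : F (j+5) = 3 * F (j+2) := F_add_three (j+2) (by omega)
      have h2 : F (j+2+b+3) = 3 * F (j+2+b) := F_add_three (j+2+b) (by omega)
      have h3 : F (j+2) * F b ≤ F (j+2+b) := by
        rcases Nat.eq_zero_or_pos s with rfl | hspos
        · omega
        · exact ih (s-1) (by omega) (j+2) b (by omega)
      calc F (j+5) * F b = 3 * (F (j+2) * F b) := by rw [h1]; ring
      _ ≤ 3 * F (j+2+b) := by omega
      _ = F (j+5+b) := by rw [show j+5+b = j+2+b+3 by ring, h2]
    | a, (i+5) =>
      have h1 : F (i+5) = 3 * F (i+2) := F_add_three (i+2) (by omega)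
      have h2 : F (a+(i+2)+3) = 3 * F (a+(i+2)) := F_add_three (a+(i+2)) (by omega)
      have h3 : F a * F (i+2) ≤ F (a+(i+2)) := by
        rcases Nat.eq_zero_or_pos s with rfl | hspos
        · omega
        · exact ih (s-1) (by omega) a (i+2) (by omega)
      calc F a * F (i+5) = 3 * (F a * F (i+2)) := by rw [h1]; ring
      _ ≤ 3 * F (a+(i+2)) := by omega
      _ = F (a+(i+5)) := by rw [show a+(i+5) = a+(i+2)+3 by ring, h2]
    | 0, 0 => decide
    | 0, 1 => decide
    | 0, 2 => decide
    | 0, 3 => decide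
    | 0, 4 => decide
    | 1, 0 => decide
    | 1, 1 => decide
    | 1, 2 => decide
    | 1, 3 => decide
    | 1, 4 => decide
    | 2, 0 => decide
    | 2, 1 => decide
    | 2, 2 => decide
    | 2, 3 => decide
    | 2, 4 => decide
    | 3, 0 => decide
    | 3, 1 => decide
    | 3, 2 => decide
    | 3, 3 => decide
    | 3, 4 => decide
    | 4, 0 => decide
    | 4, 1 => decide
    | 4, 2 => decide
    | 4, 3 => decide
    | 4, 4 => decide

def T' (n m : ℕ) : ℕ := ∑ j ∈ Finset.Icc 5 m, if 4 ∣ j then 0 else F (n - j)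

example : 2 * T' 9 9 + 5 ≤ F 9 := by decide
example : 2 * T' 10 10 + 5 ≤ F 10 := by decide
example : 2 * T' 11 11 + 5 ≤ F 11 := by decide

lemma T'_succ (n m : ℕ) (hm : 4 ≤ m) :
    T' n (m+1) = T' n m + (if 4 ∣ (m+1) then 0 else F (n - (m+1))) := by
  unfold T'
  rw [Finset.sum_Icc_succ_top (by omega)]

lemma T'_step (n : ℕ) (hn : 9 ≤ n) : T' (n+3) (n+3) ≤ 3 * T' n n + 5 := by
  have e1 : T' (n+3) (n+3) = T' (n+3) n
      + ((if 4 ∣ (n+1) then 0 else F 2) + (if 4 ∣ (n+2) then 0 else F 1)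
        + (if 4 ∣ (n+3) then 0 else F 0)) := by
    rw [show n+3 = (n+2)+1 by ring, T'_succ _ _ (by omega),
        show n+2 = (n+1)+1 by ring, T'_succ _ _ (by omega),
        show n+1 = n+1 by rfl, T'_succ _ _ (by omega)]
    have e2 : n+1+1+1 - (n+1+1+1) = 0 := by omega
    have e3 : n+1+1+1 - (n+1+1) = 1 := by omega
    have e4 : n+1+1+1 - (n+1) = 2 := by omega
    rw [show n+3 = n+1+1+1 by ring] at *
    rw [e2, e3, e4]
    ring
  have e5 : T' (n+3) n ≤ 3 * T' n n + 1 := by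
    have hle : T' (n+3) n ≤ ∑ j ∈ Finset.Icc 5 n,
        ((3 * if 4 ∣ j then 0 else F (n - j)) + (if j = n-1 then 1 else 0)) := by
      apply Finset.sum_le_sum
      intro j hj
      simp only [Finset.mem_Icc] at hj
      by_cases h4 : 4 ∣ j
      · simp [h4]
      · simp only [h4, if_false]
        by_cases hj1 : j = n-1
        · subst hj1
          have : n + 3 - (n-1) = 4 := by omega
          have h2 : n - (n-1) = 1 := by omega
          rw [this, h2]
          simp [F]
        · have hk : n + 3 - j = (n - j) + 3 := by omega
          have hk1 : n - j ≠ 1 := by omega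
          rw [hk, F_add_three _ hk1]
          simp
    calc T' (n+3) n ≤ _ := hle
    _ = 3 * T' n n + ∑ j ∈ Finset.Icc 5 n, (if j = n-1 then 1 else 0) := by
        rw [Finset.sum_add_distrib, T', Finset.mul_sum]
    _ ≤ 3 * T' n n + 1 := by
        have : (∑ j ∈ Finset.Icc 5 n, if j = n-1 then 1 else 0) ≤ 1 := by
          rw [Finset.sum_ite_eq' (Finset.Icc 5 n) (n-1) (fun _ => 1)]
          split <;> omega
        omega
  have hF : F 2 + F 1 + F 0 = 4 := by decide
  have hb : ((if 4 ∣ (n+1) then 0 else F 2) + (if 4 ∣ (n+2) then 0 else F 1)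
        + (if 4 ∣ (n+3) then 0 else F 0)) ≤ 4 := by
    split <;> split <;> split <;> simp [F] at *
  omega

lemma Tbound : ∀ n, 9 ≤ n → 2 * T' n n + 5 ≤ F n := by
  intro n
  induction n using Nat.strong_induction_on with
  | _ n ih =>
    intro hn
    match n, hn with
    | 9, _ => decide
    | 10, _ => decide
    | 11, _ => decide
    | (k+12), _ =>
      have h1 := T'_step (k+9) (by omega)
      have h2 := ih (k+9) (by omega) (by omega)
      have h3 : F (k+12) = 3 * F (k+9) := F_add_three _ (by omega)
      have e : k+9+3 = k+12 := by ring
      rw [e] at h1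
      omega

lemma c_main : ∀ n, c n n ≤ F n := by
  intro n
  induction n using Nat.strong_induction_on with
  | _ n ih =>
    rcases lt_or_ge n 13 with hn | hn
    · interval_cases n <;> decide
    · -- n ≥ 13
      have step : ∀ m, 3 ≤ m → 2 * c n m ≤ 2 * c n 3 + 2 * T' n m := by
        intro m
        induction m with
        | zero => omega
        | succ k ihm =>
          intro hk
          rcases Nat.lt_or_ge k 3 with hk3 | hk3
          · have : k = 2 := by omega
            subst this
            have e0 : T' n 3 = 0 := rfl
            norm_num
          · have h1 := ihm hk3
            rw [c_succ]
            by_cases hc : 4 ∣ (k+1) ∨ n < k+1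
            · -- increment zero
              rcases Nat.lt_or_ge k 4 with hk4 | hk4
              · have : k = 3 := by omega
                subst this
                have e1 : T' n 4 = T' n 3 := rfl
                have e2 : (4:ℕ) ∣ 3+1 ∨ n < 3+1 := by omega
                simp only [e2, if_true]
                norm_num
              · have hT := T'_succ n k hk4
                have : (0:ℕ) ≤ if 4 ∣ (k+1) then 0 else F (n - (k+1)) := by omega
                simp only [hc, if_true]
                omega
            · push_neg at hc
              obtain ⟨hc4, hcn⟩ := hc
              have hk4 : 4 ≤ k := by
                rcases Nat.lt_or_ge k 4 with h | h
                · exfalso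
                  have : k = 3 := by omega
                  subst this
                  exact hc4 (by norm_num)
                · exact h
              have hT := T'_succ n k hk4
              have hle : c (n - (k+1)) (k+1) ≤ F (n - (k+1)) :=
                le_trans (c_le_diag _ _) (ih _ (by omega))
              have hc' : ¬ (4 ∣ (k+1) ∨ n < k+1) := by
                push_neg; exact ⟨hc4, by omega⟩
              simp only [hc', if_false] at *
              simp only [hc4, if_false] at hT
              omega
      have hstep := step n (by omega)
      have hc3 : c n 3 = c n 2 + c (n-3) 3 := by
        rw [show (3:ℕ) = 2+1 by rfl, c_succ]
        have : ¬ (4 ∣ (2+1) ∨ n < 2+1) := by omega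
        rw [if_neg this]
      have hc3le : c (n-3) 3 ≤ F (n-3) :=
        le_trans (c_le_diag _ _) (ih _ (by omega))
      have hc2 := c_two n
      have hT := Tbound n (by omega)
      have hF3 : F n = 3 * F (n-3) := by
        have := F_add_three (n-3) (by omega)
        rw [show n-3+3 = n by omega] at this
        exact this
      have hFn := F_ge_3n n (by omega)
      omega

open Classical in
noncomputable def N (n m : ℕ) : ℕ :=
  Fintype.card {μ : n.Partition // ∀ i ∈ μ.parts, i ≤ m ∧ ¬ 4 ∣ i}

lemma N_zero (n : ℕ) : N n 0 = if n = 0 then 1 else 0 := by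
  classical
  unfold N
  split
  · next h =>
    subst h
    have : Unique {μ : Nat.Partition 0 // ∀ i ∈ μ.parts, i ≤ 0 ∧ ¬ 4 ∣ i} := by
      refine ⟨⟨⟨default, ?_⟩⟩, ?_⟩
      · intro i hi
        rw [Nat.Partition.partition_zero_parts] at hi
        simp at hi
      · intro a
        apply Subtype.ext
        apply Subsingleton.elim
    rw [Fintype.card_unique]
  · next h =>
    rw [Fintype.card_eq_zero_iff]
    constructor
    intro ⟨μ, hμ⟩
    have hsum := μ.parts_sum
    have hne : μ.parts ≠ 0 := by
      intro h0
      rw [h0] at hsum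
      simp at hsum
      omega
    obtain ⟨i, hi⟩ := Multiset.exists_mem_of_ne_zero hne
    have := μ.parts_pos hi
    have := (hμ i hi).1
    omega

lemma part_le_n {n : ℕ} (μ : n.Partition) {i : ℕ} (hi : i ∈ μ.parts) : i ≤ n := by
  have := Multiset.single_le_sum (fun x (_ : x ∈ μ.parts) => Nat.zero_le x) i hi
  rw [μ.parts_sum] at this
  exact this

lemma N_skip (n m : ℕ) (h : 4 ∣ (m+1) ∨ n < m+1) : N n (m+1) = N n m := by
  classical
  unfold N
  apply Fintype.card_congr
  apply Equiv.subtypeEquivRight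
  intro μ
  constructor
  · intro hp i hi
    obtain ⟨h1, h2⟩ := hp i hi
    rcases Nat.lt_or_ge i (m+1) with h3 | h3
    · exact ⟨by omega, h2⟩
    · have : i = m+1 := by omega
      subst this
      rcases h with h | h
      · exact absurd h h2
      · have := part_le_n μ hi
        omega
  · intro hp i hi
    obtain ⟨h1, h2⟩ := hp i hi
    exact ⟨by omega, h2⟩

/-- The key bijection: partitions of `n` with parts bounded by `b`, containing a part `b`,
are equivalent to partitions of `n - b` with parts bounded by `b`. -/
def eraseEquiv (n b : ℕ) (hb : 0 < b) (hbn : b ≤ n) (h4 : ¬ 4 ∣ b) :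
    {μ : n.Partition // (∀ i ∈ μ.parts, i ≤ b ∧ ¬ 4 ∣ i) ∧ b ∈ μ.parts} ≃
    {ν : (n-b).Partition // ∀ i ∈ ν.parts, i ≤ b ∧ ¬ 4 ∣ i} where
  toFun := fun ⟨μ, hμ, hbμ⟩ =>
    ⟨⟨μ.parts.erase b,
      fun hi => μ.parts_pos (Multiset.mem_of_mem_erase hi),
      by
        have h1 : b + (μ.parts.erase b).sum = μ.parts.sum := by
          rw [← Multiset.sum_cons, Multiset.cons_erase hbμ]
        have h2 := μ.parts_sum
        omega⟩,
      fun i hi => hμ i (Multiset.mem_of_mem_erase hi)⟩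
  invFun := fun ⟨ν, hν⟩ =>
    ⟨⟨b ::ₘ ν.parts,
      fun hi => by
        rcases Multiset.mem_cons.mp hi with h | h
        · omega
        · exact ν.parts_pos h,
      by rw [Multiset.sum_cons, ν.parts_sum]; omega⟩,
      fun i hi => by
        rcases Multiset.mem_cons.mp hi with h | h
        · subst h
          exact ⟨le_refl _, h4⟩
        · exact hν i h,
      Multiset.mem_cons_self _ _⟩
  left_inv := fun ⟨μ, hμ, hbμ⟩ => by
    apply Subtype.ext
    apply Nat.Partition.ext
    exact Multiset.cons_erase hbμ
  right_inv := fun ⟨ν, hν⟩ => by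
    apply Subtype.ext
    apply Nat.Partition.ext
    exact Multiset.erase_cons_head b ν.parts

set_option maxHeartbeats 1000000 in
lemma N_rec (n m : ℕ) (h4 : ¬ 4 ∣ (m+1)) (hmn : m+1 ≤ n) :
    N n (m+1) = N n m + N (n-(m+1)) (m+1) := by
  classical
  have eA : {x : {μ : n.Partition // ∀ i ∈ μ.parts, i ≤ m+1 ∧ ¬ 4 ∣ i} // (m+1) ∉ x.1.parts}
      ≃ {μ : n.Partition // ∀ i ∈ μ.parts, i ≤ m ∧ ¬ 4 ∣ i} := by
    refine (Equiv.subtypeSubtypeEquivSubtypeInter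
      (fun μ : n.Partition => ∀ i ∈ μ.parts, i ≤ m+1 ∧ ¬ 4 ∣ i)
      (fun μ : n.Partition => (m+1) ∉ μ.parts)).trans (Equiv.subtypeEquivRight ?_)
    intro μ
    constructor
    · intro ⟨hp, hq⟩ i hi
      obtain ⟨h1, h2⟩ := hp i hi
      refine ⟨?_, h2⟩
      rcases Nat.lt_or_ge i (m+1) with h3 | h3
      · omega
      · have : i = m+1 := by omega
        subst this
        exact absurd hi hq
    · intro hp
      constructor
      · intro i hi
        obtain ⟨h1, h2⟩ := hp i hi
        exact ⟨by omega, h2⟩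
      · intro hmem
        have := (hp _ hmem).1
        omega
  have eB : {x : {μ : n.Partition // ∀ i ∈ μ.parts, i ≤ m+1 ∧ ¬ 4 ∣ i} // ¬ (m+1) ∉ x.1.parts}
      ≃ {ν : (n-(m+1)).Partition // ∀ i ∈ ν.parts, i ≤ m+1 ∧ ¬ 4 ∣ i} := by
    refine (Equiv.subtypeSubtypeEquivSubtypeInter
      (fun μ : n.Partition => ∀ i ∈ μ.parts, i ≤ m+1 ∧ ¬ 4 ∣ i)
      (fun μ : n.Partition => ¬ (m+1) ∉ μ.parts)).trans
      ((Equiv.subtypeEquivRight (fun μ => ?_)).trans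
        (eraseEquiv n (m+1) (by omega) hmn h4))
    rw [not_not]
  have e := ((Equiv.sumCompl (fun x : {μ : n.Partition // ∀ i ∈ μ.parts, i ≤ m+1 ∧ ¬ 4 ∣ i} =>
      (m+1) ∉ x.1.parts)).symm.trans (Equiv.sumCongr eA eB))
  have h1 := Fintype.card_congr e
  rw [Fintype.card_sum] at h1
  exact h1

lemma N_eq_c (n : ℕ) : ∀ m, N n m = c n m := by
  induction n using Nat.strong_induction_on with
  | _ n ih =>
    intro m
    induction m with
    | zero => rw [N_zero, c_zero]
    | succ k ihm =>
      rw [c_succ]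
      by_cases hc : 4 ∣ (k+1) ∨ n < k+1
      · rw [N_skip n k hc, ihm]
        rw [if_pos hc, add_zero]
      · push_neg at hc
        obtain ⟨h4, hkn⟩ := hc
        rw [N_rec n k h4 (by omega), ihm]
        have hne : ¬ (4 ∣ (k+1) ∨ n < k+1) := by push_neg; exact ⟨h4, by omega⟩
        simp only [hne, if_false]
        congr 1
        rcases Nat.eq_zero_or_pos n with rfl | hn
        · omega
        · exact ih (n - (k+1)) (by omega) (k+1)

lemma pk4_eq_c (n : ℕ) : pk 4 n = c n n := by
  rw [← N_eq_c]
  unfold pk N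
  apply Fintype.card_congr
  apply Equiv.subtypeEquivRight
  intro μ
  constructor
  · intro hp i hi
    exact ⟨part_le_n μ hi, hp i hi⟩
  · intro hp i hi
    exact (hp i hi).2

lemma pk4_le_F (m : ℕ) : pk 4 m ≤ F m := by
  rw [pk4_eq_c]; exact c_main m

lemma prod_pk4_le (s : Multiset ℕ) : (s.map (pk 4)).prod ≤ F s.sum := by
  induction s using Multiset.induction_on with
  | empty => simp [F]
  | cons a s ih =>
    rw [Multiset.map_cons, Multiset.prod_cons, Multiset.sum_cons]
    calc pk 4 a * (s.map (pk 4)).prod ≤ F a * F s.sum :=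
          Nat.mul_le_mul (pk4_le_F a) ih
    _ ≤ F (a + s.sum) := F_supermul (a + s.sum) a s.sum (le_refl _)

lemma pk4_two : pk 4 2 = 2 := by rw [pk4_eq_c]; decide
lemma pk4_three : pk 4 3 = 3 := by rw [pk4_eq_c]; decide

lemma F_mod0 : ∀ n, n % 3 = 0 → F n = 3^(n/3) := by
  intro n
  induction n using Nat.strong_induction_on with
  | _ n ih =>
    intro h
    match n, h with
    | 0, _ => decide
    | 3, _ => decide
    | (k+6), h =>
      have h1 : F (k+6) = 3 * F (k+3) := F_add_three (k+3) (by omega)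
      have h2 : (k+3) % 3 = 0 := by omega
      rw [h1, ih (k+3) (by omega) h2]
      rw [show (k+6)/3 = (k+3)/3 + 1 by omega]
      ring

lemma F_mod1 : ∀ n, n % 3 = 1 → 4 ≤ n → F n = 4 * 3^((n-4)/3) := by
  intro n
  induction n using Nat.strong_induction_on with
  | _ n ih =>
    intro h h4
    match n, h, h4 with
    | 4, _, _ => decide
    | (k+7), h, _ =>
      have h1 : F (k+7) = 3 * F (k+4) := F_add_three (k+4) (by omega)
      rw [h1, ih (k+4) (by omega) (by omega) (by omega)]
      rw [show (k+7-4)/3 = (k+4-4)/3 + 1 by omega]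
      ring

lemma F_mod2 : ∀ n, n % 3 = 2 → F n = 2 * 3^((n-2)/3) := by
  intro n
  induction n using Nat.strong_induction_on with
  | _ n ih =>
    intro h
    match n, h with
    | 2, _ => decide
    | (k+5), h =>
      have h1 : F (k+5) = 3 * F (k+2) := F_add_three (k+2) (by omega)
      rw [h1, ih (k+2) (by omega) (by omega)]
      rw [show (k+5-2)/3 = (k+2-2)/3 + 1 by omega]
      ring

lemma ub_lemma (n : ℕ) (x : ℕ)
    (hx : x ∈ {m : ℕ | ∃ μ : n.Partition, (∀ i ∈ μ.parts, ¬ 4 ∣ i) ∧ pkext 4 μ = m}) :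
    x ≤ F n := by
  obtain ⟨μ, _, rfl⟩ := hx
  unfold pkext
  calc (μ.parts.map (pk 4)).prod ≤ F μ.parts.sum := prod_pk4_le μ.parts
  _ = F n := by rw [μ.parts_sum]

theorem maxp4_formula (n : ℕ) (hn : 2 ≤ n) :
    (n % 3 = 0 →
      IsGreatest {m : ℕ | ∃ μ : n.Partition, (∀ i ∈ μ.parts, ¬ 4 ∣ i) ∧ pkext 4 μ = m}
        (3 ^ (n / 3))) ∧
    (n % 3 = 1 →
      IsGreatest {m : ℕ | ∃ μ : n.Partition, (∀ i ∈ μ.parts, ¬ 4 ∣ i) ∧ pkext 4 μ = m}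
        (4 * 3 ^ ((n - 4) / 3))) ∧
    (n % 3 = 2 →
      IsGreatest {m : ℕ | ∃ μ : n.Partition, (∀ i ∈ μ.parts, ¬ 4 ∣ i) ∧ pkext 4 μ = m}
        (2 * 3 ^ ((n - 2) / 3))) := by
  refine ⟨?_, ?_, ?_⟩
  · intro h0
    constructor
    · -- membership
      refine ⟨⟨Multiset.replicate (n/3) 3, ?_, ?_⟩, ?_, ?_⟩
      · intro i hi
        rw [Multiset.eq_of_mem_replicate hi]
        omega
      · rw [Multiset.sum_replicate, smul_eq_mul]
        omega
      · intro i hi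
        rw [Multiset.eq_of_mem_replicate hi]
        omega
      · show ((Multiset.replicate (n/3) 3).map (pk 4)).prod = 3 ^ (n/3)
        rw [Multiset.map_replicate, Multiset.prod_replicate, pk4_three]
    · intro x hx
      exact (ub_lemma n x hx).trans_eq (F_mod0 n h0)
  · intro h1
    constructor
    · refine ⟨⟨2 ::ₘ 2 ::ₘ Multiset.replicate ((n-4)/3) 3, ?_, ?_⟩, ?_, ?_⟩
      · intro i hi
        rcases Multiset.mem_cons.mp hi with h | h
        · omega
        · rcases Multiset.mem_cons.mp h with h | h
          · omega
          · rw [Multiset.eq_of_mem_replicate h]; omega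
      · rw [Multiset.sum_cons, Multiset.sum_cons, Multiset.sum_replicate, smul_eq_mul]
        omega
      · intro i hi
        replace hi : i ∈ (2 ::ₘ 2 ::ₘ Multiset.replicate ((n-4)/3) 3) := hi
        rcases Multiset.mem_cons.mp hi with h | h
        · omega
        · rcases Multiset.mem_cons.mp h with h | h
          · omega
          · rw [Multiset.eq_of_mem_replicate h]; omega
      · show ((2 ::ₘ 2 ::ₘ Multiset.replicate ((n-4)/3) 3).map (pk 4)).prod = 4 * 3 ^ ((n-4)/3)
        rw [Multiset.map_cons, Multiset.map_cons, Multiset.prod_cons, Multiset.prod_cons,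
          Multiset.map_replicate, Multiset.prod_replicate, pk4_three, pk4_two]
        ring
    · intro x hx
      exact (ub_lemma n x hx).trans_eq (F_mod1 n h1 (by omega))
  · intro h2
    constructor
    · refine ⟨⟨2 ::ₘ Multiset.replicate ((n-2)/3) 3, ?_, ?_⟩, ?_, ?_⟩
      · intro i hi
        rcases Multiset.mem_cons.mp hi with h | h
        · omega
        · rw [Multiset.eq_of_mem_replicate h]; omega
      · rw [Multiset.sum_cons, Multiset.sum_replicate, smul_eq_mul]
        omega
      · intro i hi
        replace hi : i ∈ (2 ::ₘ Multiset.replicate ((n-2)/3) 3) := hi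
        rcases Multiset.mem_cons.mp hi with h | h
        · omega
        · rw [Multiset.eq_of_mem_replicate h]; omega
      · show ((2 ::ₘ Multiset.replicate ((n-2)/3) 3).map (pk 4)).prod = 2 * 3 ^ ((n-2)/3)
        rw [Multiset.map_cons, Multiset.prod_cons,
          Multiset.map_replicate, Multiset.prod_replicate, pk4_three, pk4_two]
    · intro x hx
      exact (ub_lemma n x hx).trans_eq (F_mod2 n h2)
end
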